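/- arXiv:1308.4361 — 2 statements merged into one kernel-verified Lean document; each statement's English description precedes it below -/
import Mathlib

section
/- Let n ≥ 2 and ν > 0, and set J_ν(x,ρ) = ∫_{S^{n−1}} ⟨x − ρθ⟩^{−ν} dS(θ) for x ∈ ℝ^n and ρ ≥ 0. Then there is a constant C (depending on n, ν) such that: if ν < n−1 then J_ν(x,ρ) ≤ C ⟨ρ + |x|⟩^{−ν} for all x ∈ ℝ^n and ρ ≥ 0; and if ν = n−1 then J_ν(x,ρ) ≤ C ⟨ρ + |x|⟩^{−ν} log(2⟨ρ⟩ + |x|) for all x ∈ ℝ^n and ρ ≥ 0. -/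
set_option maxHeartbeats 1000000


set_option autoImplicit false

open MeasureTheory Metric Set
open scoped ENNReal NNReal RealInnerProductSpace

noncomputable section

/-- Euclidean space ℝⁿ. -/
abbrev Euc (n : ℕ) := EuclideanSpace ℝ (Fin n)

/-- The surface measure on the unit sphere `S^{n-1} ⊆ ℝⁿ`. -/
def sphMeasure (n : ℕ) : Measure (sphere (0 : Euc n) 1) :=
  (volume : Measure (Euc n)).toSphere

/-- The Japanese bracket `⟨x⟩ = (1 + |x|²)^{1/2}`. -/
def jap {E : Type*} [SeminormedAddGroup E] (x : E) : ℝ :=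
  Real.sqrt (1 + ‖x‖ ^ 2)

/-- The angular integral `J_ν(x,ρ) = ∫_{S^{n-1}} ⟨x - ρθ⟩^{-ν} dS(θ)`. -/
def Jnu (n : ℕ) (ν : ℝ) (x : Euc n) (ρ : ℝ) : ℝ :=
  ∫ θ : sphere (0 : Euc n) 1, jap (x - ρ • (θ : Euc n)) ^ (-ν) ∂(sphMeasure n)


lemma one_le_jap {E : Type*} [SeminormedAddGroup E] (x : E) : 1 ≤ jap x := by
  have h := Real.sqrt_le_sqrt (show (1:ℝ) ≤ 1 + ‖x‖^2 by nlinarith [sq_nonneg ‖x‖])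
  rwa [Real.sqrt_one] at h

lemma jap_pos {E : Type*} [SeminormedAddGroup E] (x : E) : 0 < jap x :=
  lt_of_lt_of_le one_pos (one_le_jap x)

lemma norm_le_jap {E : Type*} [SeminormedAddGroup E] (x : E) : ‖x‖ ≤ jap x := by
  have h := Real.sqrt_le_sqrt (show ‖x‖^2 ≤ 1 + ‖x‖^2 by linarith)
  rwa [Real.sqrt_sq (norm_nonneg x)] at h

lemma jap_le_one_add {E : Type*} [SeminormedAddGroup E] (x : E) : jap x ≤ 1 + ‖x‖ := by
  have h := Real.sqrt_le_sqrt (show 1 + ‖x‖^2 ≤ (1+‖x‖)^2 by nlinarith [norm_nonneg x])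
  rwa [Real.sqrt_sq (by positivity)] at h

/-- Box bound: a set contained in a "slab × tube" has small volume. -/
lemma box_bound (n : ℕ) (hn : 1 ≤ n) (u : Euc n) (hu : ‖u‖ = 1) (a c r : ℝ)
    (hac : a ≤ c) (hr : 0 ≤ r) :
    volume {y : Euc n | ⟪u, y⟫ ∈ Icc a c ∧
      ∀ v : Euc n, ⟪u, v⟫ = 0 → ‖v‖ ≤ 1 → |⟪v, y⟫| ≤ r} ≤
    ENNReal.ofReal ((c - a) * (2*r)^(n-1)) := by
  classical
  have i₀ : Fin n := ⟨0, by omega⟩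
  -- orthonormal basis with b i₀ = u
  have hcard : Module.finrank ℝ (Euc n) = Fintype.card (Fin n) := by
    simp [finrank_euclideanSpace_fin]
  have horth : Orthonormal ℝ (({i₀} : Set (Fin n)).restrict (fun _ => u)) :=
    ⟨fun i => hu, fun {i j} hij => absurd (Subtype.ext (by
        have hi := i.2; have hj := j.2
        simp only [Set.mem_singleton_iff] at hi hj
        rw [hi, hj])) hij⟩
  obtain ⟨b, hb⟩ := horth.exists_orthonormalBasis_extension_of_card_eq hcard
  have hbu : b i₀ = u := hb i₀ rfl
  set g : Euc n → (Fin n → ℝ) :=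
    fun y => (MeasurableEquiv.toLp 2 (Fin n → ℝ)).symm (b.repr y) with hg
  have hgmp : MeasurePreserving g volume volume :=
    (EuclideanSpace.volume_preserving_symm_measurableEquiv_toLp (Fin n)).comp
      b.measurePreserving_repr
  have hgcoord : ∀ (y : Euc n) (i : Fin n), g y i = ⟪b i, y⟫ := by
    intro y i
    rw [hg]
    simp [← OrthonormalBasis.repr_apply_apply]
  set Box : Set (Fin n → ℝ) :=
    Set.pi univ (fun i => if i = i₀ then Icc a c else Icc (-r) r) with hBox
  have hBoxMeas : MeasurableSet Box := MeasurableSet.univ_pi (fun i => by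
    by_cases h : i = i₀ <;> simp [h, measurableSet_Icc])
  have hsub : {y : Euc n | ⟪u, y⟫ ∈ Icc a c ∧
      ∀ v : Euc n, ⟪u, v⟫ = 0 → ‖v‖ ≤ 1 → |⟪v, y⟫| ≤ r} ⊆ g ⁻¹' Box := by
    intro y hy
    rw [Set.mem_preimage, hBox, Set.mem_univ_pi]
    intro i
    by_cases h : i = i₀
    · subst h; rw [if_pos rfl, hgcoord, hbu]; exact hy.1
    · rw [if_neg h, hgcoord]
      have h1 : ⟪u, b i⟫ = 0 := by
        rw [← hbu, real_inner_comm]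
        exact b.orthonormal.2 h
      have h2 : ‖b i‖ ≤ 1 := le_of_eq (b.orthonormal.1 i)
      have := hy.2 (b i) h1 h2
      constructor
      · linarith [abs_le.1 this |>.1]
      · linarith [abs_le.1 this |>.2]
  calc volume {y : Euc n | ⟪u, y⟫ ∈ Icc a c ∧
      ∀ v : Euc n, ⟪u, v⟫ = 0 → ‖v‖ ≤ 1 → |⟪v, y⟫| ≤ r}
      ≤ volume (g ⁻¹' Box) := measure_mono hsub
    _ = volume Box := hgmp.measure_preimage hBoxMeas.nullMeasurableSet
    _ = ENNReal.ofReal ((c - a) * (2*r)^(n-1)) := by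
        rw [hBox, volume_pi_pi]
        have : ∀ i : Fin n, volume (if i = i₀ then Icc a c else Icc (-r) r)
            = if i = i₀ then ENNReal.ofReal (c - a) else ENNReal.ofReal (2*r) := by
          intro i; by_cases h : i = i₀ <;>
            simp [h, Real.volume_Icc, two_mul, sub_neg_eq_add]
        rw [Finset.prod_congr rfl (fun i _ => this i),
          ← Finset.mul_prod_erase Finset.univ _ (Finset.mem_univ i₀), if_pos rfl]
        have : ∀ i ∈ Finset.univ.erase i₀,
            (if i = i₀ then ENNReal.ofReal (c - a) else ENNReal.ofReal (2*r))
            = ENNReal.ofReal (2*r) := by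
          intro i hi; rw [if_neg (Finset.mem_erase.1 hi).1]
        rw [Finset.prod_congr rfl this, Finset.prod_const,
          Finset.card_erase_of_mem (Finset.mem_univ i₀), Finset.card_univ,
          Fintype.card_fin, ENNReal.ofReal_mul (show (0:ℝ) ≤ c - a by linarith),
          ENNReal.ofReal_pow (show (0:ℝ) ≤ 2*r by linarith)]


instance sphMeasure_finite (n : ℕ) : IsFiniteMeasure (sphMeasure n) := by
  unfold sphMeasure; infer_instance


lemma sector_bound (n : ℕ) (hn : 2 ≤ n) (x : Euc n) (hx : x ≠ 0) (ρ r : ℝ)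
    (hρ : 0 < ρ) (hr : 0 < r) :
    (sphMeasure n) {θ : sphere (0 : Euc n) 1 | ‖x - ρ • (θ : Euc n)‖ ≤ r}
      * ENNReal.ofReal (ρ^n / n)
    ≤ ENNReal.ofReal ((2*(‖x‖ + r)) * (2*r)^(n-1)) := by
  classical
  haveI : NeZero n := ⟨by omega⟩
  set capSet : Set (sphere (0 : Euc n) 1) :=
    {θ : sphere (0 : Euc n) 1 | ‖x - ρ • (θ : Euc n)‖ ≤ r} with hcap
  have hcapMeas : MeasurableSet capSet := by
    have : IsClosed capSet := isClosed_le
      (by fun_prop)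
      continuous_const
    exact this.measurableSet
  have hdim : Module.finrank ℝ (Euc n) = n := finrank_euclideanSpace_fin
  have mp := (volume : Measure (Euc n)).measurePreserving_homeomorphUnitSphereProd
  rw [hdim] at mp
  set I : Set (Ioi (0:ℝ)) := Iio ⟨ρ, hρ⟩ with hI
  have hprodmeas : MeasurableSet (capSet ×ˢ I) := hcapMeas.prod measurableSet_Iio
  have key : (volume.toSphere) capSet * Measure.volumeIoiPow (n-1) I
      = (volume : Measure (Euc n)).comap Subtype.val
        ((homeomorphUnitSphereProd (Euc n)) ⁻¹' (capSet ×ˢ I)) := by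
    rw [mp.measure_preimage hprodmeas.nullMeasurableSet, Measure.prod_prod]
  have hvip : Measure.volumeIoiPow (n-1) I = ENNReal.ofReal (ρ^n / n) := by
    have hsub : n - 1 + 1 = n := by omega
    rw [hI, Measure.volumeIoiPow_apply_Iio, hsub]
    simp [Nat.cast_sub (show 1 ≤ n by omega)]
  -- the image is contained in a box
  set b : ℝ := ‖x‖ with hb
  have hbpos : 0 < b := norm_pos_iff.2 hx
  set u : Euc n := ‖x‖⁻¹ • x with hu
  have hunorm : ‖u‖ = 1 := by
    rw [hu, norm_smul, norm_inv, norm_norm, inv_mul_cancel₀ (ne_of_gt hbpos)]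
  have hxu : b • u = x := by
    rw [hu, hb, smul_smul, mul_inv_cancel₀ (ne_of_gt hbpos), one_smul]
  have hsubset : Subtype.val '' ((homeomorphUnitSphereProd (Euc n)) ⁻¹' (capSet ×ˢ I))
      ⊆ {y : Euc n | ⟪u, y⟫ ∈ Icc (-(b+r)) (b+r) ∧
          ∀ v : Euc n, ⟪u, v⟫ = 0 → ‖v‖ ≤ 1 → |⟪v, y⟫| ≤ r} := by
    rintro _ ⟨⟨y, hy0⟩, hmem, rfl⟩
    rw [Set.mem_preimage, Set.mem_prod] at hmem
    have hyne : y ≠ 0 := hy0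
    have hynorm : 0 < ‖y‖ := norm_pos_iff.2 hyne
    have h2 : ‖y‖ < ρ := by
      have := hmem.2; rw [hI, mem_Iio, ← Subtype.coe_lt_coe] at this; simpa [homeomorphUnitSphereProd] using this
    have h1 : ‖x - ρ • (‖y‖⁻¹ • y)‖ ≤ r := by
      have := hmem.1; rw [hcap] at this; simpa [homeomorphUnitSphereProd] using this
    set lam : ℝ := ρ / ‖y‖ with hlam
    have hlam1 : 1 ≤ lam := by
      rw [hlam, le_div_iff₀ hynorm, one_mul]; exact h2.le
    have hkey : ‖x - lam • y‖ ≤ r := by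
      rw [hlam, div_eq_mul_inv, ← smul_smul]; exact h1
    have habs : ∀ v : Euc n, ‖v‖ ≤ 1 → |⟪v, lam • y⟫ - ⟪v, x⟫| ≤ r := by
      intro v hv
      have : ⟪v, lam • y⟫ - ⟪v, x⟫ = ⟪v, lam • y - x⟫ := (inner_sub_right _ _ _).symm
      rw [this]
      calc |⟪v, lam • y - x⟫| ≤ ‖v‖ * ‖lam • y - x‖ := abs_real_inner_le_norm _ _
        _ ≤ 1 * r := by
            apply mul_le_mul hv _ (norm_nonneg _) zero_le_one
            rwa [← norm_sub_rev x]
        _ = r := one_mul r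
    have hshrink : ∀ v : Euc n, |⟪v, y⟫| ≤ |⟪v, lam • y⟫| := by
      intro v
      rw [real_inner_smul_right, abs_mul, abs_of_pos (lt_of_lt_of_le one_pos hlam1)]
      nlinarith [abs_nonneg (⟪v, y⟫ : ℝ)]
    constructor
    · -- slab coordinate
      have hux : ⟪u, x⟫ = b := by
        rw [hu, real_inner_smul_left, real_inner_self_eq_norm_mul_norm, hb]
        field_simp
      have h3 := habs u hunorm.le
      rw [hux] at h3
      have h4 : |⟪u, lam • y⟫| ≤ b + r := by
        have := abs_le.1 h3
        have hb0 : (0:ℝ) ≤ b := hbpos.le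
        cases abs_le.1 h3 with
        | intro hl hr' => rw [abs_le]; constructor <;> nlinarith
      have h5 : |⟪u, y⟫| ≤ b + r := le_trans (hshrink u) h4
      exact abs_le.1 h5 |> fun h => ⟨by linarith [h.1], h.2⟩
    · intro v hv hv1
      have hvx : ⟪v, x⟫ = 0 := by
        rw [← hxu, real_inner_smul_right, real_inner_comm, hv, mul_zero]
      have h3 := habs v hv1
      rw [hvx, sub_zero] at h3
      exact le_trans (hshrink v) h3
  -- put it together
  have hbox := box_bound n (by omega) u hunorm (-(b+r)) (b+r) r
    (by nlinarith [hbpos, hr]) hr.le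
  calc (sphMeasure n) capSet * ENNReal.ofReal (ρ^n / n)
      = (volume : Measure (Euc n)).comap Subtype.val
        ((homeomorphUnitSphereProd (Euc n)) ⁻¹' (capSet ×ˢ I)) := by
        rw [sphMeasure, ← hvip, key]
    _ = volume (Subtype.val '' ((homeomorphUnitSphereProd (Euc n)) ⁻¹' (capSet ×ˢ I))) := by
        rw [_root_.comap_subtype_coe_apply
          (measurableSet_singleton (0:Euc n)).compl]
    _ ≤ volume {y : Euc n | ⟪u, y⟫ ∈ Icc (-(b+r)) (b+r) ∧
          ∀ v : Euc n, ⟪u, v⟫ = 0 → ‖v‖ ≤ 1 → |⟪v, y⟫| ≤ r} := measure_mono hsubset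
    _ ≤ ENNReal.ofReal ((b+r - -(b+r)) * (2*r)^(n-1)) := hbox
    _ = ENNReal.ofReal ((2*(‖x‖ + r)) * (2*r)^(n-1)) := by
        congr 1; rw [hb]; ring

lemma cap_bound (n : ℕ) (hn : 2 ≤ n) :
    ∃ C : ℝ, 0 < C ∧ ∀ (x : Euc n) (ρ r : ℝ), 0 ≤ ρ → 1 ≤ r →
      (sphMeasure n) {θ : sphere (0 : Euc n) 1 | ‖x - ρ • (θ : Euc n)‖ ≤ r}
        ≤ ENNReal.ofReal (C * (r / (max ρ 1 + ‖x‖))^(n-1)) := by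
  classical
  haveI : NeZero n := ⟨by omega⟩
  set M : ℝ := ((sphMeasure n) univ).toReal with hM
  have hMnn : 0 ≤ M := ENNReal.toReal_nonneg
  have hMuniv : (sphMeasure n) univ = ENNReal.ofReal M := by
    rw [hM, ENNReal.ofReal_toReal]
    exact measure_ne_top _ _
  refine ⟨M * 3^(n-1) + n * 6^n + 1, by positivity, ?_⟩
  intro x ρ r hρ hr
  set b : ℝ := ‖x‖ with hb
  have hb0 : 0 ≤ b := norm_nonneg x
  set m : ℝ := max ρ 1 with hmdef
  have hm1 : 1 ≤ m := le_max_right _ _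
  set A : ℝ := m + b with hA
  have hA1 : (1:ℝ) ≤ A := by rw [hA]; linarith
  set C : ℝ := M * 3^(n-1) + n * 6^n + 1 with hC
  have hr0 : 0 < r := lt_of_lt_of_le one_pos hr
  by_cases hcase : A ≤ 3*r
  · -- trivial bound by total mass
    have h13 : ((1:ℝ)/3)^(n-1) ≤ (r/A)^(n-1) := by
      apply pow_le_pow_left₀ (by norm_num)
      rw [div_le_div_iff₀ (by norm_num) (by linarith)]
      linarith
    have hMle : M ≤ C * (r/A)^(n-1) := by
      have h1 : M = (M * 3^(n-1)) * ((1:ℝ)/3)^(n-1) := by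
        rw [mul_assoc, ← mul_pow]; norm_num
      have h2 : (M * 3^(n-1)) * ((1:ℝ)/3)^(n-1) ≤ (M * 3^(n-1)) * (r/A)^(n-1) := by
        apply mul_le_mul_of_nonneg_left h13 (by positivity)
      have h3 : (M * 3^(n-1)) * (r/A)^(n-1) ≤ C * (r/A)^(n-1) := by
        apply mul_le_mul_of_nonneg_right _
          (pow_nonneg (div_nonneg hr0.le (by linarith)) _)
        rw [hC]
        have : (0:ℝ) ≤ (n:ℝ)*6^n := by positivity
        linarith
      linarith
    calc (sphMeasure n) _ ≤ (sphMeasure n) univ := measure_mono (subset_univ _)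
      _ = ENNReal.ofReal M := hMuniv
      _ ≤ ENNReal.ofReal (C * (r/A)^(n-1)) := ENNReal.ofReal_le_ofReal hMle
  · push_neg at hcase
    by_cases hne : {θ : sphere (0 : Euc n) 1 | ‖x - ρ • (θ : Euc n)‖ ≤ r} = ∅
    · rw [hne]; simp
    · obtain ⟨θ, hθ⟩ := Set.nonempty_iff_ne_empty.2 hne
      have hθn : ‖(θ : Euc n)‖ = 1 := by
        have := θ.2
        rwa [mem_sphere_zero_iff_norm] at this
      have hbρr : b ≤ ρ + r := by
        have h1 : ‖x‖ ≤ ‖x - ρ • (θ : Euc n)‖ + ‖ρ • (θ : Euc n)‖ := by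
          calc ‖x‖ = ‖(x - ρ • (θ : Euc n)) + ρ • (θ : Euc n)‖ := by rw [sub_add_cancel]
            _ ≤ _ := norm_add_le _ _
        have h2 : ‖ρ • (θ : Euc n)‖ = ρ := by
          rw [norm_smul, hθn, mul_one, Real.norm_eq_abs, abs_of_nonneg hρ]
        have hθ' : ‖x - ρ • (θ : Euc n)‖ ≤ r := hθ
        rw [hb]; rw [h2] at h1; linarith [hθ', h1]
      -- derive r < m, hence m = ρ and 1 < ρ
      have hrm : r < m := by
        have : A ≤ 2*m + r := by rw [hA]; have : ρ ≤ m := le_max_left _ _; linarith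
        linarith
      have h1m : 1 < m := lt_of_le_of_lt hr hrm
      have hρ1 : 1 < ρ := by
        by_contra h
        push_neg at h
        rw [hmdef, max_eq_right h] at h1m
        exact lt_irrefl _ h1m
      have hmρ : m = ρ := by rw [hmdef, max_eq_left hρ1.le]
      have hρ0 : 0 < ρ := by linarith
      have hrρ : r < ρ := by rw [← hmρ]; exact hrm
      have hx0 : x ≠ 0 := by
        intro h
        have := hθ
        simp only [Set.mem_setOf_eq, h, zero_sub, norm_neg] at this
        rw [norm_smul, hθn, mul_one, Real.norm_eq_abs, abs_of_nonneg hρ] at this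
        linarith
      have hsec := sector_bound n hn x hx0 ρ r hρ0 hr0
      have hbρ2 : b ≤ 2*ρ := by linarith
      -- divide by the positive finite factor
      have hP0 : ENNReal.ofReal (ρ^n / n) ≠ 0 := by
        have hnpos : (0:ℝ) < n := by positivity
        exact (ENNReal.ofReal_pos.2 (by positivity)).ne'
      have hPt : ENNReal.ofReal (ρ^n / n) ≠ ⊤ := ENNReal.ofReal_ne_top
      rw [← ENNReal.mul_le_mul_iff_left hP0 hPt]
      refine le_trans hsec ?_
      rw [← ENNReal.ofReal_mul (by positivity)]
      apply ENNReal.ofReal_le_ofReal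
      -- real inequality
      obtain ⟨k, hk⟩ : ∃ k, n = k + 1 := ⟨n - 1, by omega⟩
      subst hk
      simp only [Nat.add_sub_cancel] at *
      have hnpos : (0:ℝ) < (k:ℝ) + 1 := by positivity
      have step1 : 2 * (‖x‖ + r) * (2*r)^k ≤ 6 * ρ * (2*r)^k := by
        apply mul_le_mul_of_nonneg_right _ (by positivity)
        have hx2 : ‖x‖ ≤ 2*ρ := hbρ2
        linarith
      have step2 : 6 * ρ * (2*r)^k
          = (((k:ℝ)+1) * 6^(k+1)) * (r/(3*ρ))^k * (ρ^(k+1) / ((k:ℝ)+1)) := by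
        have h6 : (6:ℝ)^k = 2^k * 3^k := by rw [← mul_pow]; norm_num
        field_simp
        rw [div_pow, mul_pow, pow_succ, pow_succ, h6]
        field_simp
        ring
      have step3 : (((k:ℝ)+1) * 6^(k+1)) * (r/(3*ρ))^k * (ρ^(k+1) / ((k:ℝ)+1))
          ≤ C * (r/A)^k * (ρ^(k+1) / ((k:ℝ)+1)) := by
        apply mul_le_mul_of_nonneg_right _ (by positivity)
        apply mul_le_mul
        · rw [hC]
          push_cast
          nlinarith [pow_nonneg (show (0:ℝ) ≤ 3 by norm_num) k,
            pow_nonneg (show (0:ℝ) ≤ 6 by norm_num) (k+1), hMnn]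
        · apply pow_le_pow_left₀ (by positivity)
          apply div_le_div_of_nonneg_left hr0.le (by positivity)
          have hA' : A = m + b := rfl
          rw [hA', hmρ]; linarith
        · positivity
        · rw [hC]; positivity
      have cast1 : ((k+1 : ℕ):ℝ) = (k:ℝ) + 1 := by push_cast; ring
      rw [cast1]
      linarith

lemma two_pow_rpow (s : ℝ) (k : ℕ) : ((2:ℝ)^k)^s = ((2:ℝ)^s)^k := by
  rw [← Real.rpow_natCast (2:ℝ) k, ← Real.rpow_mul (by norm_num : (0:ℝ) ≤ 2), mul_comm,
    Real.rpow_mul (by norm_num : (0:ℝ) ≤ 2), Real.rpow_natCast]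

lemma w_eq (n : ℕ) (hn : 2 ≤ n) (ν : ℝ) (k : ℕ) :
    ((2:ℝ)^k)^(-ν) * ((2:ℝ)^k)^(n-1) = ((2:ℝ)^((n:ℝ)-1-ν))^k := by
  have h2k : (0:ℝ) < 2^k := by positivity
  rw [← Real.rpow_natCast ((2:ℝ)^k) (n-1), ← Real.rpow_add h2k, two_pow_rpow]
  congr 2
  rw [Nat.cast_sub (by omega)]
  push_cast; ring

lemma core_bound (n : ℕ) (hn : 2 ≤ n) (ν : ℝ) (hν : 0 < ν) :
    ∃ C : ℝ, 0 < C ∧ ∀ (x : Euc n) (ρ : ℝ), 0 ≤ ρ → ∃ K : ℕ,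
      (max ρ 1 + ‖x‖) ≤ 2^K ∧ ((2:ℝ)^K ≤ 2*(max ρ 1 + ‖x‖)) ∧
      Jnu n ν x ρ ≤ C * ((∑ k ∈ Finset.range K, ((2:ℝ)^((n:ℝ)-1-ν))^k) / (max ρ 1 + ‖x‖)^(n-1)
        + (max ρ 1 + ‖x‖) ^ (-ν)) := by
  classical
  obtain ⟨C₁, hC₁, hcap⟩ := cap_bound n hn
  set M : ℝ := ((sphMeasure n) univ).toReal with hM
  have hMnn : 0 ≤ M := ENNReal.toReal_nonneg
  have hMuniv : (sphMeasure n) univ = ENNReal.ofReal M :=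
    (ENNReal.ofReal_toReal (measure_ne_top _ _)).symm
  -- geometric ratio for the tail
  have h2ν1 : (2:ℝ)^(-ν) < 1 :=
    Real.rpow_lt_one_of_one_lt_of_neg one_lt_two (by linarith)
  have h2ν0 : (0:ℝ) < (2:ℝ)^(-ν) := Real.rpow_pos_of_pos two_pos _
  set T₀ : ℝ := (2:ℝ)^ν * M * (1 - (2:ℝ)^(-ν))⁻¹ with hT₀
  have hT₀nn : 0 ≤ T₀ := by
    rw [hT₀]
    apply mul_nonneg (mul_nonneg (Real.rpow_nonneg (by norm_num) _) hMnn)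
    rw [inv_nonneg]; linarith
  set Cb : ℝ := (2:ℝ)^ν * C₁ + T₀ + 1 with hCb
  have hCbpos : 0 < Cb := by
    rw [hCb]
    have : (0:ℝ) < (2:ℝ)^ν * C₁ := mul_pos (Real.rpow_pos_of_pos two_pos _) hC₁
    linarith
  refine ⟨Cb, hCbpos, ?_⟩
  intro x ρ hρ
  set b : ℝ := ‖x‖ with hb
  have hb0 : 0 ≤ b := norm_nonneg x
  set m : ℝ := max ρ 1 with hm
  have hm1 : 1 ≤ m := le_max_right _ _
  set A : ℝ := m + b with hA
  have hA1 : (1:ℝ) ≤ A := by rw [hA]; linarith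
  have hApos : (0:ℝ) < A := by linarith
  -- choose K
  have hexA : ∃ k : ℕ, A ≤ 2^k := by
    obtain ⟨N, hN⟩ := pow_unbounded_of_one_lt A (by norm_num : (1:ℝ) < 2)
    exact ⟨N, hN.le⟩
  set K : ℕ := Nat.find hexA with hK
  have hKspec : A ≤ 2^K := Nat.find_spec hexA
  have hK2 : (2:ℝ)^K ≤ 2*A := by
    rcases Nat.eq_zero_or_pos K with h0 | hpos
    · rw [h0]; simp; linarith
    · have hKm1 : ¬ (A ≤ 2^(K-1)) := Nat.find_min hexA (by omega)
      push_neg at hKm1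
      have : (2:ℝ)^K = 2 * 2^(K-1) := by
        rw [← pow_succ']
        congr 1
        omega
      rw [this]; linarith
  refine ⟨K, hKspec, hK2, ?_⟩
  -- the kernel
  set f : sphere (0 : Euc n) 1 → ℝ := fun θ => jap (x - ρ • (θ : Euc n)) ^ (-ν) with hf
  have hbasec : Continuous fun θ : sphere (0 : Euc n) 1 => jap (x - ρ • (θ : Euc n)) := by
    apply Real.continuous_sqrt.comp
    apply Continuous.add continuous_const
    fun_prop
  have hfc : Continuous f :=
    hbasec.rpow_const (fun θ => Or.inl (jap_pos _).ne')
  have hf0 : ∀ θ, 0 ≤ f θ := fun θ => Real.rpow_nonneg (jap_pos _).le _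
  have hJeq : Jnu n ν x ρ = (∫⁻ θ, ENNReal.ofReal (f θ) ∂(sphMeasure n)).toReal := by
    rw [Jnu, integral_eq_lintegral_of_nonneg_ae
      (Filter.Eventually.of_forall hf0) hfc.aestronglyMeasurable]
  -- caps
  set capS : ℝ → Set (sphere (0 : Euc n) 1) :=
    fun r => {θ : sphere (0 : Euc n) 1 | ‖x - ρ • (θ : Euc n)‖ ≤ r} with hcapS
  have hcapMeas : ∀ r, MeasurableSet (capS r) := by
    intro r
    exact (isClosed_le
      (by fun_prop)
      continuous_const).measurableSet
  set S : ℕ → Set (sphere (0 : Euc n) 1) :=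
    fun k => Nat.casesOn k (capS 1) (fun j => capS (2^(j+1)) \ capS (2^j)) with hS
  have hSMeas : ∀ k, MeasurableSet (S k) := by
    intro k
    cases k with
    | zero => exact hcapMeas 1
    | succ j => exact (hcapMeas _).diff (hcapMeas _)
  set c : ℕ → ℝ≥0∞ :=
    fun k => Nat.casesOn k 1 (fun j => ENNReal.ofReal (((2:ℝ)^j) ^ (-ν))) with hc
  -- pointwise domination
  have key1 : ∀ θ, ENNReal.ofReal (f θ) ≤
      ∑' k, (S k).indicator (fun _ => c k) θ := by
    intro θ
    set t : ℝ := ‖x - ρ • (θ : Euc n)‖ with ht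
    by_cases h1 : t ≤ 1
    · have hmem : θ ∈ S 0 := h1
      have : ENNReal.ofReal (f θ) ≤ (S 0).indicator (fun _ => c 0) θ := by
        rw [Set.indicator_of_mem hmem]
        have : f θ ≤ 1 :=
          Real.rpow_le_one_of_one_le_of_nonpos (one_le_jap _) (by linarith)
        calc ENNReal.ofReal (f θ) ≤ ENNReal.ofReal 1 := ENNReal.ofReal_le_ofReal this
          _ = c 0 := by simp [hc]
      exact this.trans (ENNReal.le_tsum 0)
    · push_neg at h1
      have hex : ∃ N : ℕ, t ≤ 2^N := by
        obtain ⟨N, hN⟩ := pow_unbounded_of_one_lt t (by norm_num : (1:ℝ) < 2)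
        exact ⟨N, hN.le⟩
      set N : ℕ := Nat.find hex with hN
      have hNspec : t ≤ 2^N := Nat.find_spec hex
      have hNpos : N ≠ 0 := by
        intro h0
        rw [h0] at hNspec
        simp at hNspec
        linarith
      obtain ⟨j, hj⟩ : ∃ j, N = j + 1 := ⟨N - 1, by omega⟩
      have hjlt : ¬ (t ≤ 2^j) := Nat.find_min hex (by omega)
      push_neg at hjlt
      have hmem : θ ∈ S (j+1) := by
        constructor
        · rw [hcapS]; rw [hj] at hNspec; exact hNspec
        · intro hcon
          exact absurd hcon (not_le.2 hjlt)
      have hfb : f θ ≤ ((2:ℝ)^j) ^ (-ν) := by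
        apply Real.rpow_le_rpow_of_nonpos (by positivity) _ (by linarith)
        calc ((2:ℝ)^j) ≤ t := hjlt.le
          _ ≤ jap (x - ρ • (θ : Euc n)) := norm_le_jap _
      have : ENNReal.ofReal (f θ) ≤ (S (j+1)).indicator (fun _ => c (j+1)) θ := by
        rw [Set.indicator_of_mem hmem]
        exact ENNReal.ofReal_le_ofReal hfb
      exact this.trans (ENNReal.le_tsum (j+1))
  -- integrate
  have lint1 : (∫⁻ θ, ENNReal.ofReal (f θ) ∂(sphMeasure n))
      ≤ ∑' k, c k * (sphMeasure n) (S k) := by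
    calc (∫⁻ θ, ENNReal.ofReal (f θ) ∂(sphMeasure n))
        ≤ ∫⁻ θ, (∑' k, (S k).indicator (fun _ => c k) θ) ∂(sphMeasure n) :=
          lintegral_mono key1
      _ = ∑' k, ∫⁻ θ, (S k).indicator (fun _ => c k) θ ∂(sphMeasure n) :=
          lintegral_tsum (fun k => (measurable_const.indicator (hSMeas k)).aemeasurable)
      _ = ∑' k, c k * (sphMeasure n) (S k) :=
          tsum_congr (fun k => lintegral_indicator_const (hSMeas k) (c k))
  -- per-term bound
  set E : ℕ → ℝ≥0∞ :=
    fun k => ENNReal.ofReal ((2:ℝ)^ν * ((2:ℝ)^k) ^ (-ν)) * (sphMeasure n) (capS ((2:ℝ)^k))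
    with hE
  have hterm : ∀ k, c k * (sphMeasure n) (S k) ≤ E k := by
    intro k
    cases k with
    | zero =>
      rw [hE, hc]
      simp only [Nat.casesOn]
      have h2 : ((2:ℝ)^(0:ℕ)) = 1 := by norm_num
      rw [h2]
      have : (1:ℝ≥0∞) ≤ ENNReal.ofReal ((2:ℝ)^ν * (1:ℝ) ^ (-ν)) := by
        rw [Real.one_rpow, mul_one, ← ENNReal.ofReal_one]
        apply ENNReal.ofReal_le_ofReal
        exact Real.one_le_rpow one_le_two hν.le
      calc (1:ℝ≥0∞) * (sphMeasure n) (S 0) = (sphMeasure n) (capS 1) := by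
            rw [one_mul, hS]
            rfl
        _ ≤ ENNReal.ofReal ((2:ℝ)^ν * (1:ℝ) ^ (-ν)) * (sphMeasure n) (capS 1) := by
            apply le_mul_of_one_le_left (by positivity) this
    | succ j =>
      rw [hE, hc]
      simp only [Nat.casesOn]
      have hcoef : ((2:ℝ)^j) ^ (-ν) = (2:ℝ)^ν * ((2:ℝ)^(j+1)) ^ (-ν) := by
        rw [pow_succ, Real.mul_rpow (by positivity) (by norm_num),
          ← mul_assoc, mul_comm ((2:ℝ)^ν), mul_assoc, ← Real.rpow_add two_pos]
        simp
      rw [hcoef]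
      apply mul_le_mul_right
      exact measure_mono diff_subset
  have lint2 : (∫⁻ θ, ENNReal.ofReal (f θ) ∂(sphMeasure n)) ≤ ∑' k, E k :=
    lint1.trans (ENNReal.tsum_le_tsum hterm)
  -- split the sum
  have hsplit : ∑' k, E k = (∑ k ∈ Finset.range K, E k) + ∑' i, E (i + K) :=
    (Summable.sum_add_tsum_nat_add' ENNReal.summable).symm
  -- head bound
  set q₀ : ℝ := (2:ℝ)^((n:ℝ)-1-ν) with hq₀
  have hq₀pos : 0 < q₀ := Real.rpow_pos_of_pos two_pos _
  have headb : (∑ k ∈ Finset.range K, E k)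
      ≤ ENNReal.ofReal ((2:ℝ)^ν * C₁ * (∑ k ∈ Finset.range K, q₀^k) / A^(n-1)) := by
    have hEk : ∀ k, E k ≤ ENNReal.ofReal ((2:ℝ)^ν * C₁ * q₀^k / A^(n-1)) := by
      intro k
      rw [hE]
      have hc1 : (1:ℝ) ≤ (2:ℝ)^k := one_le_pow₀ one_le_two
      calc ENNReal.ofReal ((2:ℝ)^ν * ((2:ℝ)^k) ^ (-ν)) * (sphMeasure n) (capS ((2:ℝ)^k))
          ≤ ENNReal.ofReal ((2:ℝ)^ν * ((2:ℝ)^k) ^ (-ν))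
            * ENNReal.ofReal (C₁ * (((2:ℝ)^k) / A)^(n-1)) := by
            apply mul_le_mul_right
            exact hcap x ρ ((2:ℝ)^k) hρ hc1
        _ = ENNReal.ofReal ((2:ℝ)^ν * ((2:ℝ)^k) ^ (-ν) * (C₁ * (((2:ℝ)^k) / A)^(n-1))) := by
            rw [← ENNReal.ofReal_mul (by positivity)]
        _ = ENNReal.ofReal ((2:ℝ)^ν * C₁ * q₀^k / A^(n-1)) := by
            congr 1
            rw [div_pow, hq₀, ← w_eq n hn ν k]
            field_simp
    calc (∑ k ∈ Finset.range K, E k)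
        ≤ ∑ k ∈ Finset.range K, ENNReal.ofReal ((2:ℝ)^ν * C₁ * q₀^k / A^(n-1)) :=
          Finset.sum_le_sum (fun k _ => hEk k)
      _ = ENNReal.ofReal (∑ k ∈ Finset.range K, (2:ℝ)^ν * C₁ * q₀^k / A^(n-1)) :=
          (ENNReal.ofReal_sum_of_nonneg (fun k _ => by positivity)).symm
      _ = ENNReal.ofReal ((2:ℝ)^ν * C₁ * (∑ k ∈ Finset.range K, q₀^k) / A^(n-1)) := by
          congr 1
          rw [← Finset.sum_div, ← Finset.mul_sum]
  -- tail bound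
  have tailb : (∑' i, E (i + K)) ≤ ENNReal.ofReal (T₀ * A^(-ν)) := by
    have hEik : ∀ i, E (i + K) ≤
        (ENNReal.ofReal ((2:ℝ)^(-ν)))^i * ENNReal.ofReal ((2:ℝ)^ν * A^(-ν) * M) := by
      intro i
      rw [hE]
      have h2iK : ((2:ℝ)^(i+K)) ^ (-ν) = ((2:ℝ)^(-ν))^i * ((2:ℝ)^K) ^ (-ν) := by
        rw [pow_add, Real.mul_rpow (by positivity) (by positivity), two_pow_rpow]
      have hKA : ((2:ℝ)^K) ^ (-ν) ≤ A^(-ν) :=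
        Real.rpow_le_rpow_of_nonpos hApos hKspec (by linarith)
      calc ENNReal.ofReal ((2:ℝ)^ν * ((2:ℝ)^(i+K)) ^ (-ν)) * (sphMeasure n) (capS ((2:ℝ)^(i+K)))
          ≤ ENNReal.ofReal ((2:ℝ)^ν * ((2:ℝ)^(i+K)) ^ (-ν)) * ENNReal.ofReal M := by
            apply mul_le_mul_right
            rw [← hMuniv]
            exact measure_mono (subset_univ _)
        _ ≤ ENNReal.ofReal ((2:ℝ)^ν * (((2:ℝ)^(-ν))^i * A^(-ν))) * ENNReal.ofReal M := by
            apply mul_le_mul_left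
            apply ENNReal.ofReal_le_ofReal
            rw [h2iK]
            apply mul_le_mul_of_nonneg_left _ (by positivity)
            rw [mul_comm (((2:ℝ)^(-ν))^i), mul_comm (((2:ℝ)^(-ν))^i)]
            apply mul_le_mul_of_nonneg_right hKA (by positivity)
        _ = (ENNReal.ofReal ((2:ℝ)^(-ν)))^i * ENNReal.ofReal ((2:ℝ)^ν * A^(-ν) * M) := by
            rw [← ENNReal.ofReal_mul (by positivity), ← ENNReal.ofReal_pow (by positivity),
              ← ENNReal.ofReal_mul (by positivity)]
            congr 1
            ring
    calc (∑' i, E (i + K))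
        ≤ ∑' i, (ENNReal.ofReal ((2:ℝ)^(-ν)))^i * ENNReal.ofReal ((2:ℝ)^ν * A^(-ν) * M) :=
          ENNReal.tsum_le_tsum hEik
      _ = (∑' i, (ENNReal.ofReal ((2:ℝ)^(-ν)))^i) * ENNReal.ofReal ((2:ℝ)^ν * A^(-ν) * M) :=
          ENNReal.tsum_mul_right
      _ = (1 - ENNReal.ofReal ((2:ℝ)^(-ν)))⁻¹ * ENNReal.ofReal ((2:ℝ)^ν * A^(-ν) * M) := by
          rw [ENNReal.tsum_geometric]
      _ ≤ ENNReal.ofReal (T₀ * A^(-ν)) := by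
          rw [← ENNReal.ofReal_one, ← ENNReal.ofReal_sub _ (by positivity),
            ← ENNReal.ofReal_inv_of_pos (by linarith),
            ← ENNReal.ofReal_mul (by rw [inv_nonneg]; linarith)]
          apply ENNReal.ofReal_le_ofReal
          rw [hT₀]
          apply le_of_eq
          ring
  -- put together
  have lintfin : (∫⁻ θ, ENNReal.ofReal (f θ) ∂(sphMeasure n))
      ≤ ENNReal.ofReal (Cb * ((∑ k ∈ Finset.range K, q₀^k) / A^(n-1) + A^(-ν))) := by
    calc (∫⁻ θ, ENNReal.ofReal (f θ) ∂(sphMeasure n))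
        ≤ ∑' k, E k := lint2
      _ = (∑ k ∈ Finset.range K, E k) + ∑' i, E (i + K) := hsplit
      _ ≤ ENNReal.ofReal ((2:ℝ)^ν * C₁ * (∑ k ∈ Finset.range K, q₀^k) / A^(n-1))
          + ENNReal.ofReal (T₀ * A^(-ν)) := add_le_add headb tailb
      _ = ENNReal.ofReal ((2:ℝ)^ν * C₁ * (∑ k ∈ Finset.range K, q₀^k) / A^(n-1)
          + T₀ * A^(-ν)) := by
          rw [← ENNReal.ofReal_add (div_nonneg (mul_nonneg (mul_nonneg (Real.rpow_nonneg zero_le_two _) hC₁.le) (Finset.sum_nonneg fun k _ => pow_nonneg hq₀pos.le k)) (pow_nonneg hApos.le _)) (mul_nonneg hT₀nn (Real.rpow_nonneg hApos.le _))]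
      _ ≤ ENNReal.ofReal (Cb * ((∑ k ∈ Finset.range K, q₀^k) / A^(n-1) + A^(-ν))) := by
          apply ENNReal.ofReal_le_ofReal
          have hs1 : (0:ℝ) ≤ (∑ k ∈ Finset.range K, q₀^k) / A^(n-1) := div_nonneg (Finset.sum_nonneg fun k _ => pow_nonneg hq₀pos.le k) (pow_nonneg hApos.le _)
          have hs2 : (0:ℝ) ≤ A^(-ν) := by positivity
          have hc1 : (2:ℝ)^ν * C₁ ≤ Cb := by rw [hCb]; linarith
          have hc2 : T₀ ≤ Cb := by
            rw [hCb]
            have : (0:ℝ) < (2:ℝ)^ν * C₁ := mul_pos (Real.rpow_pos_of_pos two_pos _) hC₁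
            linarith
          calc (2:ℝ)^ν * C₁ * (∑ k ∈ Finset.range K, q₀^k) / A^(n-1) + T₀ * A^(-ν)
              ≤ Cb * ((∑ k ∈ Finset.range K, q₀^k) / A^(n-1)) + Cb * A^(-ν) := by
                apply add_le_add
                · rw [mul_div_assoc]
                  exact mul_le_mul_of_nonneg_right hc1 hs1
                · exact mul_le_mul_of_nonneg_right hc2 hs2
            _ = Cb * ((∑ k ∈ Finset.range K, q₀^k) / A^(n-1) + A^(-ν)) := by ring
  rw [hJeq]
  calc (∫⁻ θ, ENNReal.ofReal (f θ) ∂(sphMeasure n)).toReal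
      ≤ (ENNReal.ofReal (Cb * ((∑ k ∈ Finset.range K, q₀^k) / A^(n-1) + A^(-ν)))).toReal :=
        ENNReal.toReal_mono ENNReal.ofReal_ne_top lintfin
    _ = Cb * ((∑ k ∈ Finset.range K, q₀^k) / A^(n-1) + A^(-ν)) := by
        rw [ENNReal.toReal_ofReal (mul_nonneg hCbpos.le (add_nonneg (div_nonneg (Finset.sum_nonneg fun k _ => pow_nonneg hq₀pos.le k) (pow_nonneg hApos.le _)) (Real.rpow_nonneg hApos.le _)))]


/-- **Global upper bounds for the spherical integral of the Japanese-bracket kernel**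
(Lemma `lem:singint2`, consequence): `J_ν ≲ ⟨ρ + |x|⟩^{-ν}` when `ν < n-1` and
`J_ν ≲ ⟨ρ + |x|⟩^{-ν} log(2⟨ρ⟩ + |x|)` when `ν = n-1`. -/
theorem Jnu_upper_bound (n : ℕ) (hn : 2 ≤ n) (ν : ℝ) (hν : 0 < ν) :
    ∃ C : ℝ, 0 < C ∧
      (ν < n - 1 → ∀ (x : Euc n) (ρ : ℝ), 0 ≤ ρ →
        Jnu n ν x ρ ≤ C * jap (ρ + ‖x‖) ^ (-ν)) ∧
      (ν = n - 1 → ∀ (x : Euc n) (ρ : ℝ), 0 ≤ ρ →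
        Jnu n ν x ρ ≤ C * (jap (ρ + ‖x‖) ^ (-ν) * Real.log (2 * jap ρ + ‖x‖))) := by
  classical
  obtain ⟨Cb, hCb, hcore⟩ := core_bound n hn ν hν
  set e : ℝ := (n:ℝ) - 1 - ν with he
  set q₀ : ℝ := (2:ℝ)^e with hq₀
  have hq₀pos : 0 < q₀ := Real.rpow_pos_of_pos two_pos _
  set C1f : ℝ := Cb * ((2:ℝ)^e/(q₀-1) + 1) * (2:ℝ)^ν + 1 with hC1f
  set C2f : ℝ := Cb * 3 * (2:ℝ)^ν / Real.log 2 + 1 with hC2f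
  have hlog2 : (0:ℝ) < Real.log 2 := Real.log_pos one_lt_two
  have hC2fpos : 0 < C2f := by
    rw [hC2f]
    have h1 : (0:ℝ) < Cb * 3 * (2:ℝ)^ν / Real.log 2 := by
      apply div_pos _ hlog2
      positivity
    linarith
  refine ⟨max C1f C2f, lt_of_lt_of_le hC2fpos (le_max_right _ _), ?_, ?_⟩
  · -- case ν < n - 1
    intro hcase x ρ hρ
    obtain ⟨K, hKA, hK2A, hJ⟩ := hcore x ρ hρ
    set b : ℝ := ‖x‖ with hb
    have hb0 : 0 ≤ b := norm_nonneg x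
    set m : ℝ := max ρ 1 with hm
    have hm1 : 1 ≤ m := le_max_right _ _
    set A : ℝ := m + b with hA
    have hA1 : (1:ℝ) ≤ A := by rw [hA]; linarith
    have hApos : (0:ℝ) < A := by linarith
    set R : ℝ := jap (ρ + ‖x‖) with hR
    have hRpos : 0 < R := jap_pos _
    have hR2A : R ≤ 2*A := by
      have h1 : R ≤ 1 + ‖ρ + ‖x‖‖ := jap_le_one_add _
      have h2 : ‖ρ + ‖x‖‖ = ρ + b := by
        rw [Real.norm_eq_abs, abs_of_nonneg (by linarith)]
      have h3 : 1 + ρ ≤ 2*m := by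
        have := le_max_left ρ (1:ℝ)
        rw [hm]; rcases le_total ρ 1 with h | h
        · rw [max_eq_right h]; linarith
        · rw [max_eq_left h]; linarith
      rw [h2] at h1
      rw [hA]; linarith
    have hAR : A^(-ν) ≤ (2:ℝ)^ν * R^(-ν) := by
      have h1 : (2*A)^(-ν) ≤ R^(-ν) :=
        Real.rpow_le_rpow_of_nonpos hRpos hR2A (by linarith)
      have h2 : ((2:ℝ)*A)^(-ν) = (2:ℝ)^(-ν) * A^(-ν) :=
        Real.mul_rpow (by norm_num) hApos.le
      have h3 : (2:ℝ)^ν * (2:ℝ)^(-ν) = 1 := by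
        rw [← Real.rpow_add two_pos]; simp
      calc A^(-ν) = (2:ℝ)^ν * ((2:ℝ)^(-ν) * A^(-ν)) := by
            rw [← mul_assoc, h3, one_mul]
        _ = (2:ℝ)^ν * (2*A)^(-ν) := by rw [h2]
        _ ≤ (2:ℝ)^ν * R^(-ν) := by
            apply mul_le_mul_of_nonneg_left h1 (Real.rpow_nonneg (by norm_num) _)
    have hepos : 0 < e := by rw [he]; linarith
    have hq₀1 : 1 < q₀ := by
      rw [hq₀]
      exact Real.one_lt_rpow_iff_of_pos two_pos |>.2 (Or.inl ⟨one_lt_two, hepos⟩)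
    -- geometric sum bound
    have hsum : (∑ k ∈ Finset.range K, q₀^k) ≤ q₀^K / (q₀ - 1) := by
      rw [geom_sum_eq hq₀1.ne' K]
      apply div_le_div_of_nonneg_right _ (by linarith)
      linarith [pow_nonneg hq₀pos.le K]
    have hq₀K : q₀^K ≤ (2*A)^e := by
      rw [hq₀, ← two_pow_rpow e K]
      exact Real.rpow_le_rpow (by positivity) hK2A hepos.le
    have hcast : ((n-1:ℕ):ℝ) = (n:ℝ) - 1 := by
      rw [Nat.cast_sub (by omega)]; norm_num
    have hApow : A^((n:ℝ)-1) = A^(n-1 : ℕ) := by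
      rw [← Real.rpow_natCast A (n-1), hcast]
    have hAe : A^e = A^(n-1 : ℕ) * A^(-ν) := by
      have hee : (n:ℝ) - 1 + (-ν) = e := by rw [he]; ring
      rw [← hApow, ← Real.rpow_add hApos, hee]
    have hApowpos : (0:ℝ) < A^(n-1 : ℕ) := by positivity
    have hq₀ne : q₀ - 1 ≠ 0 := sub_ne_zero.2 hq₀1.ne'
    have hq₀sub : (0:ℝ) < q₀ - 1 := by linarith
    have hfrac : (∑ k ∈ Finset.range K, q₀^k) / A^(n-1 : ℕ)
        ≤ (2:ℝ)^e/(q₀-1) * A^(-ν) := by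
      have h2 : ((2:ℝ)*A)^e = (2:ℝ)^e * A^e :=
        Real.mul_rpow (by norm_num) hApos.le
      rw [div_le_iff₀ hApowpos]
      calc (∑ k ∈ Finset.range K, q₀^k) ≤ q₀^K / (q₀ - 1) := hsum
        _ ≤ (2*A)^e / (q₀ - 1) := by gcongr
        _ = (2:ℝ)^e/(q₀-1) * A^(-ν) * A^(n-1 : ℕ) := by
            rw [h2, hAe]
            field_simp
    have hfinal : Jnu n ν x ρ ≤ C1f * R^(-ν) := by
      have h1 : Jnu n ν x ρ ≤ Cb * ((2:ℝ)^e/(q₀-1) * A^(-ν) + A^(-ν)) := by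
        apply hJ.trans
        apply mul_le_mul_of_nonneg_left _ hCb.le
        exact add_le_add_left hfrac _
      have h2 : Cb * ((2:ℝ)^e/(q₀-1) * A^(-ν) + A^(-ν))
          = Cb * ((2:ℝ)^e/(q₀-1) + 1) * A^(-ν) := by ring
      rw [h2] at h1
      have hcoef : (0:ℝ) ≤ Cb * ((2:ℝ)^e/(q₀-1) + 1) := by
        apply mul_nonneg hCb.le
        have : (0:ℝ) ≤ (2:ℝ)^e/(q₀-1) := by
          apply div_nonneg (Real.rpow_nonneg (by norm_num) _)
          linarith
        linarith
      calc Jnu n ν x ρ ≤ Cb * ((2:ℝ)^e/(q₀-1) + 1) * A^(-ν) := h1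
        _ ≤ Cb * ((2:ℝ)^e/(q₀-1) + 1) * ((2:ℝ)^ν * R^(-ν)) :=
            mul_le_mul_of_nonneg_left hAR hcoef
        _ = Cb * ((2:ℝ)^e/(q₀-1) + 1) * (2:ℝ)^ν * R^(-ν) := by ring
        _ ≤ C1f * R^(-ν) := by
            apply mul_le_mul_of_nonneg_right _ (Real.rpow_nonneg hRpos.le _)
            rw [hC1f]; linarith
    calc Jnu n ν x ρ ≤ C1f * R^(-ν) := hfinal
      _ ≤ max C1f C2f * R^(-ν) := by
          apply mul_le_mul_of_nonneg_right (le_max_left _ _)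
            (Real.rpow_nonneg hRpos.le _)
  · -- case ν = n - 1
    intro hcase x ρ hρ
    obtain ⟨K, hKA, hK2A, hJ⟩ := hcore x ρ hρ
    set b : ℝ := ‖x‖ with hb
    have hb0 : 0 ≤ b := norm_nonneg x
    set m : ℝ := max ρ 1 with hm
    have hm1 : 1 ≤ m := le_max_right _ _
    set A : ℝ := m + b with hA
    have hA1 : (1:ℝ) ≤ A := by rw [hA]; linarith
    have hApos : (0:ℝ) < A := by linarith
    set R : ℝ := jap (ρ + ‖x‖) with hR
    have hRpos : 0 < R := jap_pos _
    have hR2A : R ≤ 2*A := by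
      have h1 : R ≤ 1 + ‖ρ + ‖x‖‖ := jap_le_one_add _
      have h2 : ‖ρ + ‖x‖‖ = ρ + b := by
        rw [Real.norm_eq_abs, abs_of_nonneg (by linarith)]
      have h3 : 1 + ρ ≤ 2*m := by
        rw [hm]; rcases le_total ρ 1 with h | h
        · rw [max_eq_right h]; linarith
        · rw [max_eq_left h]; linarith
      rw [h2] at h1
      rw [hA]; linarith
    have hAR : A^(-ν) ≤ (2:ℝ)^ν * R^(-ν) := by
      have h1 : (2*A)^(-ν) ≤ R^(-ν) :=
        Real.rpow_le_rpow_of_nonpos hRpos hR2A (by linarith)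
      have h2 : ((2:ℝ)*A)^(-ν) = (2:ℝ)^(-ν) * A^(-ν) :=
        Real.mul_rpow (by norm_num) hApos.le
      have h3 : (2:ℝ)^ν * (2:ℝ)^(-ν) = 1 := by
        rw [← Real.rpow_add two_pos]; simp
      calc A^(-ν) = (2:ℝ)^ν * ((2:ℝ)^(-ν) * A^(-ν)) := by
            rw [← mul_assoc, h3, one_mul]
        _ = (2:ℝ)^ν * (2*A)^(-ν) := by rw [h2]
        _ ≤ (2:ℝ)^ν * R^(-ν) := by
            apply mul_le_mul_of_nonneg_left h1 (Real.rpow_nonneg (by norm_num) _)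
    -- log quantities
    set L : ℝ := Real.log (2 * jap ρ + ‖x‖) with hL
    have hjρ : 1 ≤ jap ρ := one_le_jap ρ
    have hmjρ : m ≤ jap ρ := by
      rw [hm]
      apply max_le _ hjρ
      calc ρ ≤ |ρ| := le_abs_self ρ
        _ = ‖ρ‖ := (Real.norm_eq_abs ρ).symm
        _ ≤ jap ρ := norm_le_jap ρ
    have hA2jb : A ≤ 2 * jap ρ + b := by rw [hA]; linarith
    have hLlog2 : Real.log 2 ≤ L := by
      rw [hL]
      apply Real.log_le_log two_pos
      linarith
    have hlogA : Real.log A ≤ L := by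
      rw [hL]
      exact Real.log_le_log hApos (by rw [← hb]; linarith)
    have hLpos : 0 < L := lt_of_lt_of_le hlog2 hLlog2
    -- K + 1 ≤ 3 L / log 2
    have hKbound : (K:ℝ) + 1 ≤ 3 * L / Real.log 2 := by
      have h1 : (K:ℝ) * Real.log 2 ≤ Real.log (2*A) := by
        rw [← Real.log_pow]
        exact Real.log_le_log (by positivity) hK2A
      have h2 : Real.log (2*A) = Real.log 2 + Real.log A :=
        Real.log_mul (by norm_num) hApos.ne'
      have h3 : (K:ℝ) * Real.log 2 ≤ Real.log 2 + L := by
        rw [h2] at h1; linarith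
      rw [le_div_iff₀ hlog2]
      linarith
    -- q₀ = 1 so the sum is K
    have he0 : e = 0 := by rw [he, hcase]; ring
    have hq₀1 : q₀ = 1 := by rw [hq₀, he0, Real.rpow_zero]
    have hsumK : (∑ k ∈ Finset.range K, q₀^k) = (K:ℝ) := by
      rw [hq₀1]
      simp
    have hApow : A^(n-1 : ℕ) = A^ν := by
      rw [← Real.rpow_natCast A (n-1)]
      congr 1
      rw [Nat.cast_sub (by omega), hcase]
      norm_num
    have hAinv : (1:ℝ) / A^(n-1 : ℕ) = A^(-ν) := by
      rw [hApow, Real.rpow_neg hApos.le, one_div]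
    have hfinal : Jnu n ν x ρ ≤ Cb * ((K:ℝ) + 1) * A^(-ν) := by
      apply hJ.trans
      apply le_of_eq
      rw [hsumK]
      rw [div_eq_mul_one_div, hAinv]
      ring
    have hfinal2 : Jnu n ν x ρ ≤ Cb * (3 * L / Real.log 2) * A^(-ν) := by
      apply hfinal.trans
      apply mul_le_mul_of_nonneg_right _ (Real.rpow_nonneg hApos.le _)
      exact mul_le_mul_of_nonneg_left hKbound hCb.le
    have hfinal3 : Jnu n ν x ρ ≤ C2f * (R^(-ν) * L) := by
      apply hfinal2.trans
      calc Cb * (3 * L / Real.log 2) * A^(-ν)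
          ≤ Cb * (3 * L / Real.log 2) * ((2:ℝ)^ν * R^(-ν)) := by
            apply mul_le_mul_of_nonneg_left hAR
            apply mul_nonneg hCb.le
            positivity
        _ = (Cb * 3 * (2:ℝ)^ν / Real.log 2) * (R^(-ν) * L) := by
            field_simp
        _ ≤ C2f * (R^(-ν) * L) := by
            apply mul_le_mul_of_nonneg_right _
              (mul_nonneg (Real.rpow_nonneg hRpos.le _) hLpos.le)
            rw [hC2f]; linarith
    calc Jnu n ν x ρ ≤ C2f * (R^(-ν) * L) := hfinal3
      _ ≤ max C1f C2f * (R^(-ν) * L) := by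
          apply mul_le_mul_of_nonneg_right (le_max_right _ _)
            (mul_nonneg (Real.rpow_nonneg hRpos.le _) hLpos.le)
end
end

section
/- Let n ≥ 2 and let q̃, r̃, p̃ ∈ [1,∞] satisfy 1 + 1/q̃ = 1/r̃ + 1/p̃. Let F : ℝ^n → ℂ be measurable with |F(x)| ≤ C₀ f(|x|) for some nonnegative measurable function f on [0,∞) and constant C₀. Then there is a constant C (depending only on n, C₀ and the exponents) such that for every measurable φ : ℝ^n → ℂ, every r > 0, and any fixed unit vector e ∈ S^{n−1}: ‖(F * φ)(r·)‖_{L^{q̃}(S^{n−1})} ≤ C ∫₀^∞ ‖ f(| r e − ρ θ |) ‖_{L^{r̃}_θ(S^{n−1})} ‖φ(ρ·)‖_{L^{p̃}(S^{n−1})} ρ^{n−1} dρ, where (F*φ)(x) = ∫_{ℝ^n} F(x−y)φ(y) dy and the inner norm is taken in the variable θ ∈ S^{n−1}. -/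
set_option autoImplicit false

open MeasureTheory Metric Set
open scoped ENNReal NNReal

noncomputable section

set_option maxHeartbeats 1600000
section SphereYoungAuxSection

open Function

namespace SphereYoungAux


variable {α : Type*} [MeasurableSpace α]

lemma iSup_min_nat_rpow (x : ℝ≥0∞) {q : ℝ} (hq : 1 ≤ q) :
    ⨆ m : ℕ, min x (m : ℝ≥0∞) ^ q = x ^ q := by
  have hq0 : (0:ℝ) ≤ q := le_trans zero_le_one hq
  refine le_antisymm (iSup_le fun m => ENNReal.rpow_le_rpow (min_le_left _ _) hq0) ?_
  rcases eq_or_ne x ∞ with rfl | hx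
  · simp only [min_eq_right (le_top : (_ : ℝ≥0∞) ≤ ⊤)]
    have h1 : ∀ m : ℕ, 1 ≤ m → ((m : ℝ≥0∞)) ≤ (m : ℝ≥0∞) ^ q := fun m hm =>
      ENNReal.le_rpow_self_of_one_le (by exact_mod_cast hm) hq
    have : (⊤ : ℝ≥0∞) = ⨆ m : ℕ, (m : ℝ≥0∞) := ENNReal.iSup_natCast.symm
    rw [ENNReal.top_rpow_of_pos (lt_of_lt_of_le zero_lt_one hq)]
    rw [this]
    refine iSup_le fun m => ?_
    rcases Nat.eq_zero_or_pos m with rfl | hm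
    · simp
    · exact le_trans (h1 m hm) (le_iSup (fun m : ℕ => (m : ℝ≥0∞) ^ q) m)
  · obtain ⟨m, hm⟩ := ENNReal.exists_nat_gt hx
    rw [show x ^ q = min x (m:ℝ≥0∞) ^ q by rw [min_eq_left hm.le]]
    exact le_iSup (fun m : ℕ => min x (m:ℝ≥0∞) ^ q) m

/-- **Minkowski's integral inequality** for lower Lebesgue integrals. -/
theorem minkowski_lintegral {β : Type*} [MeasurableSpace β]
    (μ : Measure α) (ν : Measure β) [IsFiniteMeasure μ] [SigmaFinite ν]
    (H : β → α → ℝ≥0∞) (hH : Measurable (uncurry H))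
    {q : ℝ} (hq : 1 ≤ q) :
    (∫⁻ a, (∫⁻ b, H b a ∂ν) ^ q ∂μ) ^ (1/q) ≤
      ∫⁻ b, (∫⁻ a, H b a ^ q ∂μ) ^ (1/q) ∂ν := by
  have hq0 : (0:ℝ) < q := lt_of_lt_of_le zero_lt_one hq
  set I : α → ℝ≥0∞ := fun a => ∫⁻ b, H b a ∂ν with hIdef
  have hImeas : Measurable I := hH.lintegral_prod_left
  have hswapmeas : Measurable (uncurry fun a b => H b a) := hH.comp measurable_swap
  rcases eq_or_lt_of_le hq with rfl | hq1
  · simp only [ENNReal.rpow_one, one_div_one]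
    exact le_of_eq (lintegral_lintegral_swap hswapmeas.aemeasurable)
  set R := ∫⁻ b, (∫⁻ a, H b a ^ q ∂μ) ^ (1/q) ∂ν with hR
  have hqc : q.HolderConjugate (q / (q - 1)) := by
    have := Real.HolderConjugate.conjExponent hq1
    rwa [Real.conjExponent] at this
  set q' : ℝ := q / (q - 1) with hq'
  have hq'0 : (0:ℝ) < q' := Real.HolderTriple.pos hqc.symm
  have hqq' : 1/q + 1/q' = 1 := by
    have := hqc.inv_add_inv_eq_one
    simpa [one_div] using this
  have hmul : (q - 1) * q' = q := by
    rw [hq', mul_comm, div_mul_cancel₀ _ (by linarith : q - 1 ≠ 0)]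
  have key : ∀ m : ℕ, (∫⁻ a, min (I a) m ^ q ∂μ) ^ (1/q) ≤ R := by
    intro m
    set Im : α → ℝ≥0∞ := fun a => min (I a) m with hImdef
    have hImmeas : Measurable Im := hImeas.min measurable_const
    set B := ∫⁻ a, Im a ^ q ∂μ with hB
    have hBfin : B ≠ ∞ := by
      have hle : ∀ a, Im a ^ q ≤ (m:ℝ≥0∞) ^ q := fun a =>
        ENNReal.rpow_le_rpow (min_le_right _ _) hq0.le
      have : B ≤ (m:ℝ≥0∞) ^ q * μ univ := by
        rw [hB, ← lintegral_const]
        exact lintegral_mono hle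
      exact ne_top_of_le_ne_top
        (ENNReal.mul_ne_top (ENNReal.rpow_ne_top_of_nonneg hq0.le (by simp))
          (measure_ne_top μ _)) this
    rcases eq_or_ne B 0 with hB0 | hB0
    · rw [hB0, ENNReal.zero_rpow_of_pos (by positivity)]
      exact zero_le
    have pow_split : ∀ x : ℝ≥0∞, x ^ q = x * x ^ (q - 1) := by
      intro x
      nth_rewrite 2 [← ENNReal.rpow_one x]
      rw [← ENNReal.rpow_add_of_nonneg _ _ zero_le_one (by linarith)]
      congr 1
      ring
    have step : B ≤ R * B ^ (1/q') := by
      have c1 : B ≤ ∫⁻ a, I a * Im a ^ (q - 1) ∂μ := by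
        rw [hB]
        refine lintegral_mono fun a => ?_
        rw [pow_split]
        exact mul_le_mul_left (min_le_left _ _) _
      have c2 : ∫⁻ a, I a * Im a ^ (q - 1) ∂μ
          = ∫⁻ a, ∫⁻ b, H b a * Im a ^ (q - 1) ∂ν ∂μ := by
        refine lintegral_congr fun a => ?_
        rw [hIdef]
        exact (lintegral_mul_const'' _ ((hH.comp (measurable_id.prodMk measurable_const)
          : Measurable fun b => H b a)).aemeasurable).symm
      have c3 : ∫⁻ a, ∫⁻ b, H b a * Im a ^ (q - 1) ∂ν ∂μ
          = ∫⁻ b, ∫⁻ a, H b a * Im a ^ (q - 1) ∂μ ∂ν := by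
        refine lintegral_lintegral_swap ?_
        exact (hswapmeas.mul ((hImmeas.comp measurable_fst).pow_const (q - 1))).aemeasurable
      have c4 : ∀ b, ∫⁻ a, H b a * Im a ^ (q - 1) ∂μ
          ≤ (∫⁻ a, H b a ^ q ∂μ) ^ (1/q) * B ^ (1/q') := by
        intro b
        have hold := ENNReal.lintegral_mul_le_Lp_mul_Lq μ hqc
          (f := fun a => H b a) (g := fun a => Im a ^ (q - 1))
          ((hH.comp (measurable_const.prodMk measurable_id)
            : Measurable fun a => H b a)).aemeasurable
          ((hImmeas.pow_const (q - 1)).aemeasurable)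
        refine le_trans hold (le_of_eq ?_)
        congr 1
        congr 1
        refine lintegral_congr fun a => ?_
        rw [← ENNReal.rpow_mul, hmul]
      calc B ≤ ∫⁻ b, ∫⁻ a, H b a * Im a ^ (q - 1) ∂μ ∂ν := by
              rw [← c3, ← c2]; exact c1
        _ ≤ ∫⁻ b, (∫⁻ a, H b a ^ q ∂μ) ^ (1/q) * B ^ (1/q') ∂ν := lintegral_mono c4
        _ = R * B ^ (1/q') := by
              rw [hR, lintegral_mul_const' _ _
                (ENNReal.rpow_ne_top_of_nonneg (by positivity) hBfin)]
    -- now cancel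
    have hBq' : B ^ (1/q') ≠ 0 := by
      simp only [ne_eq, ENNReal.rpow_eq_zero_iff, not_or]
      constructor
      · rintro ⟨h, -⟩; exact hB0 h
      · rintro ⟨h, -⟩; exact hBfin h
    have hBq't : B ^ (1/q') ≠ ∞ := ENNReal.rpow_ne_top_of_nonneg (by positivity) hBfin
    have hfac : B = B ^ (1/q) * B ^ (1/q') := by
      rw [← ENNReal.rpow_add_of_nonneg _ _ (by positivity) (by positivity), hqq',
        ENNReal.rpow_one]
    have step2 : B ^ (1/q) * B ^ (1/q') ≤ R * B ^ (1/q') := by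
      rw [← hfac]; exact step
    exact (ENNReal.mul_le_mul_iff_left hBq' hBq't).mp step2
  -- monotone convergence
  have hsup : ∫⁻ a, I a ^ q ∂μ = ⨆ m : ℕ, ∫⁻ a, min (I a) m ^ q ∂μ := by
    rw [← lintegral_iSup]
    · exact lintegral_congr fun a => (iSup_min_nat_rpow (I a) hq).symm
    · exact fun m => (hImeas.min measurable_const).pow_const q
    · intro i j hij a
      exact ENNReal.rpow_le_rpow (min_le_min le_rfl (by exact_mod_cast hij)) hq0.le
  have key' : ∀ m : ℕ, ∫⁻ a, min (I a) m ^ q ∂μ ≤ R ^ q := by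
    intro m
    have := ENNReal.rpow_le_rpow (key m) hq0.le
    rwa [← ENNReal.rpow_mul, one_div_mul_cancel hq0.ne', ENNReal.rpow_one] at this
  calc (∫⁻ a, I a ^ q ∂μ) ^ (1/q)
      ≤ (R ^ q) ^ (1/q) := by
        rw [hsup]
        exact ENNReal.rpow_le_rpow (iSup_le key') (by positivity)
    _ = R := by rw [← ENNReal.rpow_mul, mul_one_div_cancel hq0.ne', ENNReal.rpow_one]




variable {n : ℕ}

/-- The map on the unit sphere induced by a linear isometry equivalence. -/
def sphMap (R : Euc n ≃ₗᵢ[ℝ] Euc n) (θ : sphere (0 : Euc n) 1) : sphere (0 : Euc n) 1 :=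
  ⟨R θ, by
    have h : ‖(θ : Euc n)‖ = 1 := mem_sphere_zero_iff_norm.mp θ.2
    simp [mem_sphere_zero_iff_norm, R.norm_map, h]⟩

lemma continuous_sphMap (R : Euc n ≃ₗᵢ[ℝ] Euc n) : Continuous (sphMap R) :=
  Continuous.subtype_mk (R.continuous.comp continuous_subtype_val) _

lemma measurePreserving_sphMap [Nontrivial (Euc n)] (R : Euc n ≃ₗᵢ[ℝ] Euc n) :
    MeasurePreserving (sphMap R) (sphMeasure n) (sphMeasure n) := by
  have hTmeas : Measurable (sphMap R) := (continuous_sphMap R).measurable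
  refine ⟨hTmeas, ?_⟩
  set μ : Measure (Euc n) := volume with hμ
  have h0c : MeasurableSet ({0}ᶜ : Set (Euc n)) := (measurableSet_singleton 0).compl
  have hemb : MeasurableEmbedding (Subtype.val : ({0}ᶜ : Set (Euc n)) → Euc n) :=
    MeasurableEmbedding.subtype_coe h0c
  set ν := μ.comap (Subtype.val : ({0}ᶜ : Set (Euc n)) → Euc n) with hν
  -- the restriction of R to nonzero vectors
  set R₀ : ({0}ᶜ : Set (Euc n)) → ({0}ᶜ : Set (Euc n)) :=
    fun x => ⟨R x, by
      have hx : (x : Euc n) ≠ 0 := x.2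
      simp only [mem_compl_iff, mem_singleton_iff]
      intro h
      exact hx (by simpa using R.map_eq_zero_iff.mp h)⟩ with hR₀
  have hR₀meas : Measurable R₀ :=
    Continuous.measurable (Continuous.subtype_mk (R.continuous.comp continuous_subtype_val) _)
  have hR₀mp : Measure.map R₀ ν = ν := by
    refine Measure.ext fun s hs => ?_
    rw [Measure.map_apply hR₀meas hs, hemb.comap_apply, hemb.comap_apply]
    have himg : Subtype.val '' (R₀ ⁻¹' s) = ⇑R ⁻¹' (Subtype.val '' s) := by
      ext x
      constructor
      · rintro ⟨x₀, hx₀, rfl⟩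
        exact ⟨R₀ x₀, hx₀, rfl⟩
      · rintro ⟨z₀, hz₀, hz⟩
        have hxne : x ≠ 0 := by
          intro h
          apply z₀.2
          simp only [mem_singleton_iff]
          rw [hz, h, map_zero]
        refine ⟨⟨x, hxne⟩, ?_, rfl⟩
        have : R₀ ⟨x, hxne⟩ = z₀ := Subtype.ext (by simp [hR₀, hz])
        simpa [this] using hz₀
    rw [himg]
    exact (R.measurePreserving).measure_preimage
      (hemb.measurableSet_image' hs).nullMeasurableSet
  -- transfer through the polar homeomorphism
  have hpolar := (μ.measurePreserving_homeomorphUnitSphereProd :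
    MeasurePreserving (homeomorphUnitSphereProd (Euc n)) ν
      (μ.toSphere.prod (Measure.volumeIoiPow (Module.finrank ℝ (Euc n) - 1))))
  set νpow := Measure.volumeIoiPow (Module.finrank ℝ (Euc n) - 1) with hνpow
  have hcomm : ⇑(homeomorphUnitSphereProd (Euc n)) ∘ R₀
      = (Prod.map (sphMap R) id) ∘ ⇑(homeomorphUnitSphereProd (Euc n)) := by
    funext x
    have hnorm : ‖(R₀ x : Euc n)‖ = ‖(x : Euc n)‖ := R.norm_map _
    refine Prod.ext ?_ ?_
    · refine Subtype.ext ?_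
      show ((homeomorphUnitSphereProd (Euc n) (R₀ x)).1 : Euc n)
        = R ((homeomorphUnitSphereProd (Euc n) x).1 : Euc n)
      rw [homeomorphUnitSphereProd_apply_fst_coe, homeomorphUnitSphereProd_apply_fst_coe]
      show ‖(R₀ x : Euc n)‖⁻¹ • (R₀ x : Euc n) = R (‖(x : Euc n)‖⁻¹ • (x : Euc n))
      rw [hnorm]
      exact (_root_.map_smul R _ _).symm
    · refine Subtype.ext ?_
      simp only [comp_apply, Prod.map_snd, id_eq, homeomorphUnitSphereProd_apply_snd_coe]
      exact hnorm
  have hprod : Measure.map (Prod.map (sphMap R) id) (μ.toSphere.prod νpow)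
      = μ.toSphere.prod νpow := by
    calc Measure.map (Prod.map (sphMap R) id) (μ.toSphere.prod νpow)
        = Measure.map (Prod.map (sphMap R) id)
            (Measure.map (homeomorphUnitSphereProd (Euc n)) ν) := by rw [hpolar.map_eq]
      _ = Measure.map ((Prod.map (sphMap R) id) ∘ ⇑(homeomorphUnitSphereProd (Euc n))) ν := by
          rw [Measure.map_map (hTmeas.prodMap measurable_id)
            (homeomorphUnitSphereProd (Euc n)).measurable]
      _ = Measure.map (⇑(homeomorphUnitSphereProd (Euc n)) ∘ R₀) ν := by rw [← hcomm]
      _ = Measure.map (homeomorphUnitSphereProd (Euc n)) (Measure.map R₀ ν) := by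
          rw [Measure.map_map (homeomorphUnitSphereProd (Euc n)).measurable hR₀meas]
      _ = Measure.map (homeomorphUnitSphereProd (Euc n)) ν := by rw [hR₀mp]
      _ = μ.toSphere.prod νpow := hpolar.map_eq
  -- conclude by evaluating on rectangles
  have hmapprod : (Measure.map (sphMap R) μ.toSphere).prod νpow = μ.toSphere.prod νpow := by
    rw [← Measure.map_prod_map _ _ hTmeas measurable_id, Measure.map_id] at hprod
    exact hprod
  set k : ℕ := Module.finrank ℝ (Euc n) - 1 with hk
  have hν1 : νpow (Iio ⟨1, mem_Ioi.mpr one_pos⟩)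
      = ENNReal.ofReal ((1:ℝ) ^ (k + 1) / (k + 1)) := Measure.volumeIoiPow_apply_Iio k _
  have hν1ne : νpow (Iio ⟨1, mem_Ioi.mpr one_pos⟩) ≠ 0 := by
    rw [hν1]
    simp only [ne_eq, ENNReal.ofReal_eq_zero, not_le, one_pow]
    positivity
  have hν1fin : νpow (Iio ⟨1, mem_Ioi.mpr one_pos⟩) ≠ ∞ := by
    rw [hν1]; exact ENNReal.ofReal_ne_top
  show Measure.map (sphMap R) μ.toSphere = μ.toSphere
  refine Measure.ext fun s hs => ?_
  have h1 := congrArg (fun m : Measure _ => m (s ×ˢ Iio ⟨1, mem_Ioi.mpr one_pos⟩)) hmapprod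
  simp only [Measure.prod_prod] at h1
  have h2 : (Measure.map (sphMap R) μ.toSphere) s ≤ μ.toSphere s :=
    (ENNReal.mul_le_mul_iff_left hν1ne hν1fin).mp h1.le
  have h3 : μ.toSphere s ≤ (Measure.map (sphMap R) μ.toSphere) s :=
    (ENNReal.mul_le_mul_iff_left hν1ne hν1fin).mp h1.ge
  exact le_antisymm h2 h3


lemma lintegral_sphMap [Nontrivial (Euc n)] (R : Euc n ≃ₗᵢ[ℝ] Euc n)
    {G : sphere (0 : Euc n) 1 → ℝ≥0∞} (hG : Measurable G) :
    ∫⁻ θ, G (sphMap R θ) ∂sphMeasure n = ∫⁻ θ, G θ ∂sphMeasure n :=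
  (measurePreserving_sphMap R).lintegral_comp hG

/-- Rotation invariance of integrals over the sphere of functions of `‖a • v - b • θ‖`. -/
lemma lintegral_sphere_invariant [Nontrivial (Euc n)] (u : ℝ → ℝ≥0∞) (hu : Measurable u)
    (a b : ℝ) {v w : Euc n} (hv : ‖v‖ = 1) (hw : ‖w‖ = 1) :
    ∫⁻ θ, u ‖a • v - b • (θ : Euc n)‖ ∂sphMeasure n
      = ∫⁻ θ, u ‖a • w - b • (θ : Euc n)‖ ∂sphMeasure n := by
  set R := Submodule.reflection (Submodule.span ℝ {w - v})ᗮ with hRdef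
  have hRv : R w = v := Submodule.reflection_sub (by rw [hv, hw])
  have hG : Measurable fun θ : sphere (0 : Euc n) 1 => u ‖a • v - b • (θ : Euc n)‖ :=
    hu.comp (Continuous.measurable (by fun_prop))
  have h1 := lintegral_sphMap (n := n) R hG
  rw [← h1]
  refine lintegral_congr fun θ => ?_
  have : a • v - b • ((sphMap R θ : sphere (0 : Euc n) 1) : Euc n)
      = R (a • w - b • (θ : Euc n)) := by
    show a • v - b • (R (θ : Euc n)) = R (a • w - b • (θ : Euc n))
    rw [map_sub, _root_.map_smul, _root_.map_smul, hRv]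
  rw [this, R.norm_map]

lemma essSup_sphere_invariant [Nontrivial (Euc n)] (u : ℝ → ℝ≥0∞) (hu : Measurable u)
    (a b : ℝ) {v w : Euc n} (hv : ‖v‖ = 1) (hw : ‖w‖ = 1) :
    essSup (fun θ : sphere (0 : Euc n) 1 => u ‖a • v - b • (θ : Euc n)‖) (sphMeasure n)
      = essSup (fun θ : sphere (0 : Euc n) 1 => u ‖a • w - b • (θ : Euc n)‖) (sphMeasure n) := by
  set R := Submodule.reflection (Submodule.span ℝ {w - v})ᗮ with hRdef
  have hRv : R w = v := Submodule.reflection_sub (by rw [hv, hw])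
  have hG : Measurable fun θ : sphere (0 : Euc n) 1 => u ‖a • v - b • (θ : Euc n)‖ :=
    hu.comp (Continuous.measurable (by fun_prop))
  have hmp := measurePreserving_sphMap (n := n) R
  have h1 : essSup (fun θ : sphere (0 : Euc n) 1 => u ‖a • v - b • (θ : Euc n)‖) (sphMeasure n)
      = essSup ((fun θ : sphere (0 : Euc n) 1 => u ‖a • v - b • (θ : Euc n)‖) ∘ sphMap R)
          (sphMeasure n) := by
    rw [← essSup_map_measure (f := sphMap R) (by rw [hmp.map_eq]; exact hG.aemeasurable)
      hmp.measurable.aemeasurable, hmp.map_eq]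
  rw [h1]
  refine essSup_congr_ae (Filter.Eventually.of_forall fun θ => ?_)
  show u ‖a • v - b • (R (θ : Euc n))‖ = _
  have : a • v - b • (R (θ : Euc n)) = R (a • w - b • (θ : Euc n)) := by
    rw [map_sub, _root_.map_smul, _root_.map_smul, hRv]
  rw [this, R.norm_map]

/-- Polar coordinates for lower Lebesgue integrals on `ℝⁿ`. -/
lemma lintegral_polar [Nontrivial (Euc n)] (h : Euc n → ℝ≥0∞) (hh : Measurable h) :
    ∫⁻ y, h y = ∫⁻ ρ in Ioi (0:ℝ),
      ENNReal.ofReal (ρ ^ (n - 1)) * ∫⁻ θ, h (ρ • (θ : Euc n)) ∂sphMeasure n := by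
  set μ : Measure (Euc n) := volume with hμ
  have h0c : MeasurableSet ({0}ᶜ : Set (Euc n)) := (measurableSet_singleton 0).compl
  have hpolar := μ.measurePreserving_homeomorphUnitSphereProd
  set νpow := Measure.volumeIoiPow (Module.finrank ℝ (Euc n) - 1) with hνpow
  have hfr : Module.finrank ℝ (Euc n) - 1 = n - 1 := by rw [finrank_euclideanSpace_fin]
  set g : sphere (0 : Euc n) 1 × Ioi (0:ℝ) → ℝ≥0∞ :=
    fun z => h ((z.2 : ℝ) • (z.1 : Euc n)) with hgdef
  have hgmeas : Measurable g := by
    apply hh.comp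
    fun_prop
  have e1 : ∫⁻ y, h y ∂μ = ∫⁻ y in {0}ᶜ, h y ∂μ := by
    rw [MeasureTheory.restrict_compl_singleton]
  have e2 : ∫⁻ y in {0}ᶜ, h y ∂μ
      = ∫⁻ x : ({0}ᶜ : Set (Euc n)), h x ∂(μ.comap Subtype.val) :=
    (lintegral_subtype_comap h0c h).symm
  have e3 : ∫⁻ x : ({0}ᶜ : Set (Euc n)), h x ∂(μ.comap Subtype.val)
      = ∫⁻ z, g z ∂(μ.toSphere.prod νpow) := by
    rw [← hpolar.lintegral_comp hgmeas]
    refine lintegral_congr fun x => ?_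
    show h (x : Euc n) = h (((homeomorphUnitSphereProd (Euc n) x).2 : ℝ)
      • ((homeomorphUnitSphereProd (Euc n) x).1 : Euc n))
    rw [homeomorphUnitSphereProd_apply_fst_coe, homeomorphUnitSphereProd_apply_snd_coe]
    show h (x : Euc n) = h (‖(x:Euc n)‖ • (‖(x:Euc n)‖⁻¹ • (x : Euc n)))
    rw [smul_smul, mul_inv_cancel₀ (norm_ne_zero_iff.mpr x.2), one_smul]
  have e4 : ∫⁻ z, g z ∂(μ.toSphere.prod νpow)
      = ∫⁻ ρ : Ioi (0:ℝ), ∫⁻ θ, g (θ, ρ) ∂μ.toSphere ∂νpow :=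
    lintegral_prod_symm' g hgmeas
  have e5 : ∫⁻ ρ : Ioi (0:ℝ), ∫⁻ θ, g (θ, ρ) ∂μ.toSphere ∂νpow
      = ∫⁻ ρ : Ioi (0:ℝ), ENNReal.ofReal ((ρ:ℝ) ^ (n-1)) *
          ∫⁻ θ, g (θ, ρ) ∂μ.toSphere ∂((volume : Measure ℝ).comap (Subtype.val : Ioi (0:ℝ) → ℝ)) := by
    rw [hνpow, hfr, Measure.volumeIoiPow]
    rw [lintegral_withDensity_eq_lintegral_mul _ ?_ ?_]
    · rfl
    · fun_prop
    · exact Measurable.lintegral_prod_right (f := fun (ρ : Ioi (0:ℝ)) θ => g (θ, ρ))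
        (hgmeas.comp measurable_swap)
  have e6 : ∫⁻ ρ : Ioi (0:ℝ), ENNReal.ofReal ((ρ:ℝ) ^ (n-1)) *
          ∫⁻ θ, g (θ, ρ) ∂μ.toSphere ∂((volume : Measure ℝ).comap (Subtype.val : Ioi (0:ℝ) → ℝ))
      = ∫⁻ ρ in Ioi (0:ℝ), ENNReal.ofReal (ρ ^ (n-1)) *
          ∫⁻ θ, h (ρ • (θ : Euc n)) ∂sphMeasure n :=
    lintegral_subtype_comap measurableSet_Ioi
      (fun ρ : ℝ => ENNReal.ofReal (ρ ^ (n-1)) * ∫⁻ θ, h (ρ • (θ : Euc n)) ∂sphMeasure n)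
  rw [e1, e2, e3, e4, e5, e6]


/-- The key Young-type estimate on a finite measure space, for a kernel whose `L^r` norms
in each variable are constant. -/
lemma young_pointwise {α : Type*} [MeasurableSpace α] {μ : Measure α} [SFinite μ]
    (k : α → α → ℝ≥0∞) (Φ : α → ℝ≥0∞)
    (hk : Measurable (uncurry k)) (hΦ : Measurable Φ)
    {q r p : ℝ} (hq : 1 ≤ q) (hr : 1 ≤ r) (hp : 1 ≤ p)
    (hexp : 1 + 1/q = 1/r + 1/p)
    (A : ℝ≥0∞) (hA : ∀ θ, ∫⁻ ω, k θ ω ^ r ∂μ = A) (hA' : ∀ ω, ∫⁻ θ, k θ ω ^ r ∂μ = A) :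
    (∫⁻ θ, (∫⁻ ω, k θ ω * Φ ω ∂μ) ^ q ∂μ) ^ (1/q)
      ≤ A ^ (1/r) * (∫⁻ ω, Φ ω ^ p ∂μ) ^ (1/p) := by
  have hq0 : (0:ℝ) < q := lt_of_lt_of_le zero_lt_one hq
  have hr0 : (0:ℝ) < r := lt_of_lt_of_le zero_lt_one hr
  have hp0 : (0:ℝ) < p := lt_of_lt_of_le zero_lt_one hp
  set w1 : ℝ := 1/q with hw1
  set w2 : ℝ := 1 - 1/p with hw2
  set w3 : ℝ := 1 - 1/r with hw3
  have hw1nn : 0 ≤ w1 := by positivity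
  have hw2nn : 0 ≤ w2 := by
    rw [hw2, sub_nonneg]
    rw [div_le_one hp0]; linarith
  have hw3nn : 0 ≤ w3 := by
    rw [hw3, sub_nonneg]
    rw [div_le_one hr0]; linarith
  have hsum : w1 + w2 + w3 = 1 := by rw [hw1, hw2, hw3]; linarith
  have hrw : r * w1 + r * w2 = 1 := by
    have h12 : w1 + w2 = 1/r := by rw [hw1, hw2]; linarith
    rw [← mul_add, h12, mul_one_div, div_self hr0.ne']
  have hpw : p * w1 + p * w3 = 1 := by
    have h13 : w1 + w3 = 1/p := by rw [hw1, hw3]; linarith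
    rw [← mul_add, h13, mul_one_div, div_self hp0.ne']
  set B := ∫⁻ ω, Φ ω ^ p ∂μ with hB
  -- scalar decomposition
  have scalar : ∀ x y : ℝ≥0∞, x * y = (x^r * y^p)^w1 * (x^r)^w2 * (y^p)^w3 := by
    intro x y
    rw [ENNReal.mul_rpow_of_nonneg _ _ hw1nn]
    rw [← ENNReal.rpow_mul, ← ENNReal.rpow_mul, ← ENNReal.rpow_mul, ← ENNReal.rpow_mul]
    rw [show x ^ (r*w1) * y ^ (p*w1) * x ^ (r*w2) * y ^ (p*w3)
        = (x ^ (r*w1) * x ^ (r*w2)) * (y ^ (p*w1) * y ^ (p*w3)) by ring]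
    rw [← ENNReal.rpow_add_of_nonneg _ _ (by positivity) (by positivity),
      ← ENNReal.rpow_add_of_nonneg _ _ (by positivity) (by positivity),
      hrw, hpw, ENNReal.rpow_one, ENNReal.rpow_one]
  -- measurability of sections
  have hksec : ∀ θ, Measurable (k θ) := fun θ =>
    hk.comp (measurable_const.prodMk measurable_id)
  set J : α → ℝ≥0∞ := fun θ => ∫⁻ ω, k θ ω ^ r * Φ ω ^ p ∂μ with hJ
  have hJmeas : Measurable J :=
    Measurable.lintegral_prod_right ((hk.pow_const r).mul ((hΦ.comp measurable_snd).pow_const p))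
  -- pointwise Hölder in ω
  have step1 : ∀ θ, ∫⁻ ω, k θ ω * Φ ω ∂μ ≤ J θ ^ w1 * A ^ w2 * B ^ w3 := by
    intro θ
    have hdecomp : ∫⁻ ω, k θ ω * Φ ω ∂μ
        = ∫⁻ ω, (k θ ω ^ r * Φ ω ^ p) ^ w1 * (k θ ω ^ r) ^ w2 * (Φ ω ^ p) ^ w3 ∂μ :=
      lintegral_congr fun ω => scalar _ _
    rw [hdecomp]
    set f : Fin 3 → α → ℝ≥0∞ := ![fun ω => k θ ω ^ r * Φ ω ^ p,
      fun ω => k θ ω ^ r, fun ω => Φ ω ^ p] with hf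
    set ws : Fin 3 → ℝ := ![w1, w2, w3] with hws
    have hfs : ∀ i ∈ Finset.univ, AEMeasurable (f i) μ := by
      intro i _
      fin_cases i
      · exact (((hksec θ).pow_const r).mul (hΦ.pow_const p)).aemeasurable
      · exact ((hksec θ).pow_const r).aemeasurable
      · exact (hΦ.pow_const p).aemeasurable
    have hws1 : ∑ i, ws i = 1 := by
      rw [hws, Fin.sum_univ_three]
      simpa using hsum
    have hwsnn : ∀ i ∈ Finset.univ, 0 ≤ ws i := by
      intro i _
      fin_cases i <;> simpa [hws] using by assumption
    have := ENNReal.lintegral_prod_norm_pow_le Finset.univ hfs hws1 hwsnn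
    rw [show (∫⁻ a, ∏ i, f i a ^ ws i ∂μ)
        = ∫⁻ ω, (k θ ω ^ r * Φ ω ^ p) ^ w1 * (k θ ω ^ r) ^ w2 * (Φ ω ^ p) ^ w3 ∂μ by
      refine lintegral_congr fun ω => ?_
      rw [Fin.prod_univ_three]
      rfl] at this
    refine le_trans this (le_of_eq ?_)
    rw [Fin.prod_univ_three]
    simp only [hf, hws, Matrix.cons_val_zero, Matrix.cons_val_one, Matrix.head_cons,
      Matrix.cons_val_two, Matrix.tail_cons]
    rw [hA θ]
  -- integrate in θ
  have step2 : ∫⁻ θ, (∫⁻ ω, k θ ω * Φ ω ∂μ) ^ q ∂μ ≤ (A ^ w2 * B ^ w3) ^ q * (A * B) := by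
    have hJint : ∫⁻ θ, J θ ∂μ = A * B := by
      rw [hJ]
      rw [lintegral_lintegral_swap ((hk.pow_const r).mul
        ((hΦ.comp measurable_snd).pow_const p)).aemeasurable]
      have : ∀ ω, ∫⁻ θ, k θ ω ^ r * Φ ω ^ p ∂μ = A * Φ ω ^ p := by
        intro ω
        have hm : Measurable fun θ => k θ ω ^ r :=
          (hk.comp (measurable_id.prodMk measurable_const)).pow_const r
        rw [lintegral_mul_const _ hm, hA' ω]
      rw [lintegral_congr this, lintegral_const_mul _ (hΦ.pow_const p)]
    calc ∫⁻ θ, (∫⁻ ω, k θ ω * Φ ω ∂μ) ^ q ∂μ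
        ≤ ∫⁻ θ, (J θ ^ w1 * A ^ w2 * B ^ w3) ^ q ∂μ :=
          lintegral_mono fun θ => ENNReal.rpow_le_rpow (step1 θ) hq0.le
      _ = ∫⁻ θ, J θ * (A ^ w2 * B ^ w3) ^ q ∂μ := by
          refine lintegral_congr fun θ => ?_
          rw [mul_assoc, ENNReal.mul_rpow_of_nonneg _ _ hq0.le, ← ENNReal.rpow_mul,
            hw1, one_div_mul_cancel hq0.ne', ENNReal.rpow_one]
      _ = (∫⁻ θ, J θ ∂μ) * (A ^ w2 * B ^ w3) ^ q := lintegral_mul_const _ hJmeas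
      _ = (A ^ w2 * B ^ w3) ^ q * (A * B) := by rw [hJint, mul_comm]
  calc (∫⁻ θ, (∫⁻ ω, k θ ω * Φ ω ∂μ) ^ q ∂μ) ^ (1/q)
      ≤ ((A ^ w2 * B ^ w3) ^ q * (A * B)) ^ (1/q) :=
        ENNReal.rpow_le_rpow step2 (by positivity)
    _ = A ^ w2 * B ^ w3 * (A ^ (1/q) * B ^ (1/q)) := by
        rw [ENNReal.mul_rpow_of_nonneg _ _ (by positivity), ← ENNReal.rpow_mul,
          mul_one_div_cancel hq0.ne', ENNReal.rpow_one,
          ENNReal.mul_rpow_of_nonneg _ _ (by positivity)]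
    _ = (A ^ w2 * A ^ (1/q)) * (B ^ w3 * B ^ (1/q)) := by ring
    _ = A ^ (1/r) * B ^ (1/p) := by
        rw [← ENNReal.rpow_add_of_nonneg _ _ hw2nn (by positivity),
          ← ENNReal.rpow_add_of_nonneg _ _ hw3nn (by positivity)]
        congr 2
        · rw [hw2]; linarith
        · rw [hw3]; linarith


/-- swapping norm identity -/
lemma norm_smul_sub_swap {E : Type*} [NormedAddCommGroup E] [InnerProductSpace ℝ E]
    {x y : E} (hxy : ‖x‖ = ‖y‖) (a b : ℝ) : ‖a • x - b • y‖ = ‖a • y - b • x‖ := by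
  have h1 : ‖a • x - b • y‖ ^ 2 = ‖a • y - b • x‖ ^ 2 := by
    rw [@norm_sub_sq_real, @norm_sub_sq_real, real_inner_smul_left, real_inner_smul_left,
      real_inner_smul_right, real_inner_smul_right, real_inner_comm x y,
      norm_smul, norm_smul, norm_smul, norm_smul, hxy]
  have := congrArg Real.sqrt h1
  rwa [Real.sqrt_sq (norm_nonneg _), Real.sqrt_sq (norm_nonneg _)] at this


end SphereYoungAux

end SphereYoungAuxSection

open SphereYoungAux Function

/-- **Spherical Young inequality for convolutions with radially dominated kernels**
(estimate `eq:firstest`): for exponents `1 + 1/q̃ = 1/r̃ + 1/p̃` and a kernel `F` with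
`|F(x)| ≤ C₀ f(|x|)`, the `L^{q̃}` norm on the sphere of radius `r` of `F * φ` is
controlled by `∫₀^∞ ‖f(|re − ρθ|)‖_{L^{r̃}_θ} ‖φ(ρ·)‖_{L^{p̃}_θ} ρ^{n-1} dρ`. -/
theorem sphere_young_convolution
    (n : ℕ) (hn : 2 ≤ n) (C₀ : ℝ)
    (qt rt pt : ℝ≥0∞) (hqt : 1 ≤ qt) (hrt : 1 ≤ rt) (hpt : 1 ≤ pt)
    (hexp : 1 + 1 / qt = 1 / rt + 1 / pt) :
    ∃ C : ℝ≥0∞, C ≠ ∞ ∧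
      ∀ (F : Euc n → ℂ) (f : ℝ → ℝ), Measurable F → Measurable f →
        (∀ t : ℝ, 0 ≤ f t) → (∀ x : Euc n, ‖F x‖ ≤ C₀ * f ‖x‖) →
        ∀ (φ : Euc n → ℂ), Measurable φ →
        ∀ (r : ℝ), 0 < r → ∀ e : Euc n, ‖e‖ = 1 →
          eLpNorm
              (fun θ : sphere (0 : Euc n) 1 =>
                ∫ y : Euc n, F (r • (θ : Euc n) - y) * φ y)
              qt (sphMeasure n)
            ≤ C * ∫⁻ ρ in Ioi (0 : ℝ),
                eLpNorm
                    (fun θ : sphere (0 : Euc n) 1 => f ‖r • e - ρ • (θ : Euc n)‖)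
                    rt (sphMeasure n)
                  * eLpNorm
                      (fun θ : sphere (0 : Euc n) 1 => φ (ρ • (θ : Euc n)))
                      pt (sphMeasure n)
                  * ENNReal.ofReal (ρ ^ (n - 1)) := by
  have hn0 : 0 < n := by omega
  haveI hnt : Nontrivial (Euc n) := by
    refine nontrivial_of_ne (EuclideanSpace.single ⟨0, hn0⟩ (1:ℝ)) 0 fun h => ?_
    have := congrArg (fun v : Euc n => v ⟨0, hn0⟩) h
    simp [EuclideanSpace.single_apply] at this
  haveI : IsFiniteMeasure (sphMeasure n) := by unfold sphMeasure; infer_instance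
  have hqt0 : qt ≠ 0 := (lt_of_lt_of_le zero_lt_one hqt).ne'
  have hrt0 : rt ≠ 0 := (lt_of_lt_of_le zero_lt_one hrt).ne'
  have hpt0 : pt ≠ 0 := (lt_of_lt_of_le zero_lt_one hpt).ne'
  refine ⟨ENNReal.ofReal C₀, ENNReal.ofReal_ne_top, ?_⟩
  intro F f hF hf hf0 hFf φ hφ r hr e he
  set σ := sphMeasure n with hσ
  set A : ℝ → ℝ≥0∞ := fun ρ =>
    eLpNorm (fun θ : sphere (0 : Euc n) 1 => f ‖r • e - ρ • (θ : Euc n)‖) rt σ with hA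
  set B : ℝ → ℝ≥0∞ := fun ρ =>
    eLpNorm (fun θ : sphere (0 : Euc n) 1 => φ (ρ • (θ : Euc n))) pt σ with hB
  set S : ℝ → sphere (0 : Euc n) 1 → ℝ≥0∞ := fun ρ θ =>
    ∫⁻ ω : sphere (0 : Euc n) 1,
      ENNReal.ofReal (f ‖r • (θ : Euc n) - ρ • (ω : Euc n)‖)
        * (‖φ (ρ • (ω : Euc n))‖₊ : ℝ≥0∞) ∂σ with hS
  -- measurability of the kernel on products
  have hSu : Measurable (uncurry S) := by
    apply Measurable.lintegral_prod_right
      (f := fun (z : ℝ × sphere (0 : Euc n) 1) (ω : sphere (0 : Euc n) 1) =>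
        ENNReal.ofReal (f ‖r • (z.2 : Euc n) - z.1 • (ω : Euc n)‖)
          * (‖φ (z.1 • (ω : Euc n))‖₊ : ℝ≥0∞))
    refine Measurable.mul (M := ℝ≥0∞) ?_ ?_
    · exact (hf.comp ((by fun_prop :
        Continuous fun z : (ℝ × sphere (0 : Euc n) 1) × sphere (0 : Euc n) 1 =>
          ‖r • (z.1.2 : Euc n) - z.1.1 • (z.2 : Euc n)‖).measurable)).ennreal_ofReal
    · exact (hφ.comp ((by fun_prop :
        Continuous fun z : (ℝ × sphere (0 : Euc n) 1) × sphere (0 : Euc n) 1 =>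
          z.1.1 • (z.2 : Euc n)).measurable)).enorm
  -- step 1 : pointwise bound via polar coordinates
  have step1 : ∀ θ : sphere (0 : Euc n) 1,
      (‖∫ y : Euc n, F (r • (θ : Euc n) - y) * φ y‖₊ : ℝ≥0∞)
        ≤ ENNReal.ofReal C₀ * ∫⁻ ρ in Ioi (0:ℝ), ENNReal.ofReal (ρ ^ (n-1)) * S ρ θ := by
    intro θ
    have hmeas : Measurable fun y : Euc n =>
        ENNReal.ofReal (f ‖r • (θ : Euc n) - y‖) * (‖φ y‖₊ : ℝ≥0∞) := by
      refine Measurable.mul ?_ hφ.enorm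
      exact (hf.comp ((by fun_prop :
        Continuous fun y : Euc n => ‖r • (θ : Euc n) - y‖).measurable)).ennreal_ofReal
    calc (‖∫ y : Euc n, F (r • (θ : Euc n) - y) * φ y‖₊ : ℝ≥0∞)
        ≤ ∫⁻ y, ‖F (r • (θ : Euc n) - y) * φ y‖₊ ∂volume :=
          enorm_integral_le_lintegral_enorm _
      _ ≤ ∫⁻ y, ENNReal.ofReal C₀ *
            (ENNReal.ofReal (f ‖r • (θ : Euc n) - y‖) * (‖φ y‖₊ : ℝ≥0∞)) ∂volume := by
          refine lintegral_mono fun y => ?_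
          rw [nnnorm_mul, ENNReal.coe_mul, ← mul_assoc]
          refine mul_le_mul_left ?_ _
          calc (‖F (r • (θ : Euc n) - y)‖₊ : ℝ≥0∞)
              = ENNReal.ofReal ‖F (r • (θ : Euc n) - y)‖ := (ofReal_norm _).symm
            _ ≤ ENNReal.ofReal (C₀ * f ‖r • (θ : Euc n) - y‖) :=
                ENNReal.ofReal_le_ofReal (hFf _)
            _ = ENNReal.ofReal C₀ * ENNReal.ofReal (f ‖r • (θ : Euc n) - y‖) :=
                ENNReal.ofReal_mul' (hf0 _)
      _ = ENNReal.ofReal C₀ * ∫⁻ y,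
            ENNReal.ofReal (f ‖r • (θ : Euc n) - y‖) * (‖φ y‖₊ : ℝ≥0∞) ∂volume :=
          lintegral_const_mul' _ _ ENNReal.ofReal_ne_top
      _ = ENNReal.ofReal C₀ * ∫⁻ ρ in Ioi (0:ℝ), ENNReal.ofReal (ρ ^ (n-1)) * S ρ θ := by
          rw [lintegral_polar (n := n) _ hmeas]
  -- measurability helpers for fixed ρ
  have hkmeas : ∀ ρ : ℝ, Measurable (uncurry fun (θ ω : sphere (0 : Euc n) 1) =>
      ENNReal.ofReal (f ‖r • (θ : Euc n) - ρ • (ω : Euc n)‖)) := fun ρ =>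
    (hf.comp ((by fun_prop :
      Continuous fun z : sphere (0 : Euc n) 1 × sphere (0 : Euc n) 1 =>
        ‖r • (z.1 : Euc n) - ρ • (z.2 : Euc n)‖).measurable)).ennreal_ofReal
  have hΦmeas : ∀ ρ : ℝ, Measurable (fun ω : sphere (0 : Euc n) 1 =>
      (‖φ (ρ • (ω : Euc n))‖₊ : ℝ≥0∞)) := fun ρ =>
    (hφ.comp ((by fun_prop :
      Continuous fun ω : sphere (0 : Euc n) 1 => ρ • (ω : Euc n)).measurable)).enorm
  have humeas : ∀ c : ℝ, Measurable (fun t : ℝ => ENNReal.ofReal (f t) ^ c) :=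
    fun c => (hf.ennreal_ofReal).pow_const c
  have hθunit : ∀ θ : sphere (0 : Euc n) 1, ‖(θ : Euc n)‖ = 1 := fun θ =>
    mem_sphere_zero_iff_norm.mp θ.2
  have hksec : ∀ (ρ : ℝ) (θ : sphere (0 : Euc n) 1), Measurable
      (fun ω : sphere (0 : Euc n) 1 =>
        ENNReal.ofReal (f ‖r • (θ : Euc n) - ρ • (ω : Euc n)‖)) := fun ρ θ =>
    (hf.comp ((by fun_prop : Continuous fun ω : sphere (0 : Euc n) 1 =>
      ‖r • (θ : Euc n) - ρ • (ω : Euc n)‖).measurable)).ennreal_ofReal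
  -- constant L^r (in each variable) of the kernel, via rotation invariance
  have hAconst : ∀ (ρ c : ℝ) (θ : sphere (0 : Euc n) 1),
      ∫⁻ ω : sphere (0 : Euc n) 1,
          ENNReal.ofReal (f ‖r • (θ : Euc n) - ρ • (ω : Euc n)‖) ^ c ∂σ
        = ∫⁻ ω : sphere (0 : Euc n) 1,
          ENNReal.ofReal (f ‖r • e - ρ • (ω : Euc n)‖) ^ c ∂σ := fun ρ c θ =>
    lintegral_sphere_invariant (fun t => ENNReal.ofReal (f t) ^ c) (humeas c) r ρ
      (hθunit θ) he
  have hAconst' : ∀ (ρ c : ℝ) (ω : sphere (0 : Euc n) 1),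
      ∫⁻ θ : sphere (0 : Euc n) 1,
          ENNReal.ofReal (f ‖r • (θ : Euc n) - ρ • (ω : Euc n)‖) ^ c ∂σ
        = ∫⁻ ω' : sphere (0 : Euc n) 1,
          ENNReal.ofReal (f ‖r • e - ρ • (ω' : Euc n)‖) ^ c ∂σ := by
    intro ρ c ω
    have hsw : ∀ θ : sphere (0 : Euc n) 1,
        ENNReal.ofReal (f ‖r • (θ : Euc n) - ρ • (ω : Euc n)‖) ^ c
          = ENNReal.ofReal (f ‖r • (ω : Euc n) - ρ • (θ : Euc n)‖) ^ c := fun θ => by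
      rw [norm_smul_sub_swap (by rw [hθunit θ, hθunit ω]) r ρ]
    rw [lintegral_congr hsw]
    exact lintegral_sphere_invariant (fun t => ENNReal.ofReal (f t) ^ c) (humeas c) r ρ
      (hθunit ω) he
  by_cases hqtop : qt = ∞
  · -- q = ∞ : pointwise estimate suffices
    subst hqtop
    have hexp' : 1/rt + 1/pt = 1 := by
      rw [← hexp]; simp
    have key : ∀ (ρ : ℝ) (θ : sphere (0 : Euc n) 1), S ρ θ ≤ A ρ * B ρ := by
      intro ρ θ
      by_cases hrtop : rt = ∞
      · -- r = ∞, p = 1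
        have hpt1 : pt = 1 := by
          rw [hrtop] at hexp'
          simp only [one_div, ENNReal.inv_top, zero_add] at hexp'
          exact ENNReal.inv_eq_one.mp hexp'
        have hAρ : A ρ = essSup (fun ω : sphere (0 : Euc n) 1 =>
            ENNReal.ofReal (f ‖r • (θ : Euc n) - ρ • (ω : Euc n)‖)) σ := by
          show eLpNorm _ rt σ = _
          rw [hrtop, eLpNorm_exponent_top, eLpNormEssSup]
          rw [show (fun ω : sphere (0 : Euc n) 1 =>
              ‖f ‖r • e - ρ • (ω : Euc n)‖‖ₑ)
            = fun ω : sphere (0 : Euc n) 1 =>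
              ENNReal.ofReal (f ‖r • e - ρ • (ω : Euc n)‖) from
            funext fun ω => Real.enorm_eq_ofReal (hf0 _)]
          exact (essSup_sphere_invariant (fun t => ENNReal.ofReal (f t)) hf.ennreal_ofReal
            r ρ (hθunit θ) he).symm
        have hBρ : B ρ = ∫⁻ ω : sphere (0 : Euc n) 1, (‖φ (ρ • (ω : Euc n))‖₊ : ℝ≥0∞) ∂σ := by
          show eLpNorm _ pt σ = _
          rw [hpt1, eLpNorm_one_eq_lintegral_enorm]
          rfl
        rw [hAρ, hBρ]
        calc S ρ θ ≤ ∫⁻ ω : sphere (0 : Euc n) 1,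
              essSup (fun ω' : sphere (0 : Euc n) 1 =>
                ENNReal.ofReal (f ‖r • (θ : Euc n) - ρ • (ω' : Euc n)‖)) σ
                * (‖φ (ρ • (ω : Euc n))‖₊ : ℝ≥0∞) ∂σ := by
              refine lintegral_mono_ae ?_
              filter_upwards [ENNReal.ae_le_essSup (fun ω' : sphere (0 : Euc n) 1 =>
                ENNReal.ofReal (f ‖r • (θ : Euc n) - ρ • (ω' : Euc n)‖))] with ω hω
              exact mul_le_mul_left hω _
          _ = _ := lintegral_const_mul _ (hΦmeas ρ)
      · by_cases hptop : pt = ∞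
        · -- p = ∞, r = 1
          have hrt1 : rt = 1 := by
            rw [hptop] at hexp'
            simp only [one_div, ENNReal.inv_top, add_zero] at hexp'
            exact ENNReal.inv_eq_one.mp hexp'
          have hAρ : A ρ = ∫⁻ ω : sphere (0 : Euc n) 1,
              ENNReal.ofReal (f ‖r • e - ρ • (ω : Euc n)‖) ∂σ := by
            show eLpNorm _ rt σ = _
            rw [hrt1, eLpNorm_one_eq_lintegral_enorm]
            exact lintegral_congr fun ω => Real.enorm_eq_ofReal (hf0 _)
          have hBρ : B ρ = essSup (fun ω : sphere (0 : Euc n) 1 =>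
              (‖φ (ρ • (ω : Euc n))‖₊ : ℝ≥0∞)) σ := by
            show eLpNorm _ pt σ = _
            rw [hptop, eLpNorm_exponent_top, eLpNormEssSup]
            rfl
          rw [hAρ, hBρ]
          calc S ρ θ ≤ ∫⁻ ω : sphere (0 : Euc n) 1,
                ENNReal.ofReal (f ‖r • (θ : Euc n) - ρ • (ω : Euc n)‖)
                  * essSup (fun ω' : sphere (0 : Euc n) 1 =>
                      (‖φ (ρ • (ω' : Euc n))‖₊ : ℝ≥0∞)) σ ∂σ := by
                refine lintegral_mono_ae ?_
                filter_upwards [ENNReal.ae_le_essSup (fun ω' : sphere (0 : Euc n) 1 =>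
                  (‖φ (ρ • (ω' : Euc n))‖₊ : ℝ≥0∞))] with ω hω
                exact mul_le_mul_right hω _
            _ = (∫⁻ ω : sphere (0 : Euc n) 1,
                  ENNReal.ofReal (f ‖r • (θ : Euc n) - ρ • (ω : Euc n)‖) ∂σ)
                  * essSup (fun ω' : sphere (0 : Euc n) 1 =>
                      (‖φ (ρ • (ω' : Euc n))‖₊ : ℝ≥0∞)) σ := by
                exact lintegral_mul_const _ (hksec ρ θ)
            _ = _ := by
                have h1 := hAconst ρ 1 θ
                simp only [ENNReal.rpow_one] at h1
                rw [h1]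
        · -- 1 < r, p < ∞ conjugate
          have hrR : 1 ≤ rt.toReal := by
            simpa using ENNReal.toReal_mono hrtop hrt
          have hpR : 1 ≤ pt.toReal := by
            simpa using ENNReal.toReal_mono hptop hpt
          have hconj : 1 / rt.toReal + 1 / pt.toReal = 1 := by
            have := congrArg ENNReal.toReal hexp'
            rwa [ENNReal.toReal_add (by simp [one_div, ENNReal.inv_ne_top, hrt0])
                (by simp [one_div, ENNReal.inv_ne_top, hpt0]),
              one_div, one_div, ENNReal.toReal_inv, ENNReal.toReal_inv, ENNReal.toReal_one,
              ← one_div, ← one_div] at this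
          have hrR0 : (0:ℝ) < rt.toReal := lt_of_lt_of_le zero_lt_one hrR
          have hpR0 : (0:ℝ) < pt.toReal := lt_of_lt_of_le zero_lt_one hpR
          have hAρ : A ρ = (∫⁻ ω : sphere (0 : Euc n) 1,
              ENNReal.ofReal (f ‖r • e - ρ • (ω : Euc n)‖) ^ rt.toReal ∂σ) ^ (1/rt.toReal) := by
            show eLpNorm _ rt σ = _
            rw [eLpNorm_eq_lintegral_rpow_enorm_toReal hrt0 hrtop]
            congr 1
            exact lintegral_congr fun ω => by rw [Real.enorm_eq_ofReal (hf0 _)]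
          have hBρ : B ρ = (∫⁻ ω : sphere (0 : Euc n) 1,
              (‖φ (ρ • (ω : Euc n))‖₊ : ℝ≥0∞) ^ pt.toReal ∂σ) ^ (1/pt.toReal) := by
            show eLpNorm _ pt σ = _
            rw [eLpNorm_eq_lintegral_rpow_enorm_toReal hpt0 hptop]
            rfl
          rw [hAρ, hBρ]
          have hdecomp : S ρ θ = ∫⁻ ω : sphere (0 : Euc n) 1,
              (ENNReal.ofReal (f ‖r • (θ : Euc n) - ρ • (ω : Euc n)‖) ^ rt.toReal) ^ (1/rt.toReal)
                * ((‖φ (ρ • (ω : Euc n))‖₊ : ℝ≥0∞) ^ pt.toReal) ^ (1/pt.toReal) ∂σ := by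
            refine lintegral_congr fun ω => ?_
            rw [← ENNReal.rpow_mul, ← ENNReal.rpow_mul, mul_one_div_cancel hrR0.ne',
              mul_one_div_cancel hpR0.ne', ENNReal.rpow_one, ENNReal.rpow_one]
          rw [hdecomp]
          have hhold := ENNReal.lintegral_mul_norm_pow_le (μ := σ)
            (f := fun ω : sphere (0 : Euc n) 1 =>
              ENNReal.ofReal (f ‖r • (θ : Euc n) - ρ • (ω : Euc n)‖) ^ rt.toReal)
            (g := fun ω : sphere (0 : Euc n) 1 =>
              (‖φ (ρ • (ω : Euc n))‖₊ : ℝ≥0∞) ^ pt.toReal)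
            ((hksec ρ θ).pow_const rt.toReal).aemeasurable
            ((hΦmeas ρ).pow_const pt.toReal).aemeasurable
            (by positivity) (by positivity) hconj
          refine le_trans hhold (le_of_eq ?_)
          rw [hAconst ρ rt.toReal θ]
    -- assemble for q = ∞
    rw [eLpNorm_exponent_top, eLpNormEssSup]
    refine essSup_le_of_ae_le _ (Filter.Eventually.of_forall fun θ => ?_)
    refine le_trans (step1 θ) (mul_le_mul_right (lintegral_mono fun ρ => ?_) _)
    calc ENNReal.ofReal (ρ ^ (n-1)) * S ρ θ
        ≤ ENNReal.ofReal (ρ ^ (n-1)) * (A ρ * B ρ) := mul_le_mul_right (key ρ θ) _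
      _ = A ρ * B ρ * ENNReal.ofReal (ρ ^ (n-1)) := mul_comm _ _
  · -- q < ∞
    have hrtop : rt ≠ ∞ := by
      intro h
      rw [h] at hexp
      simp only [one_div, ENNReal.inv_top, zero_add] at hexp
      have h1 : (1:ℝ≥0∞) + qt⁻¹ ≤ 1 + 0 := by
        rw [hexp, add_zero]
        exact ENNReal.inv_le_one.mpr hpt
      have h2 : qt⁻¹ ≤ 0 := (ENNReal.add_le_add_iff_left ENNReal.one_ne_top).mp h1
      exact hqtop (ENNReal.inv_eq_zero.mp (le_antisymm h2 (zero_le)))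
    have hptop : pt ≠ ∞ := by
      intro h
      rw [h] at hexp
      simp only [one_div, ENNReal.inv_top, add_zero] at hexp
      have h1 : (1:ℝ≥0∞) + qt⁻¹ ≤ 1 + 0 := by
        rw [hexp, add_zero]
        exact ENNReal.inv_le_one.mpr hrt
      have h2 : qt⁻¹ ≤ 0 := (ENNReal.add_le_add_iff_left ENNReal.one_ne_top).mp h1
      exact hqtop (ENNReal.inv_eq_zero.mp (le_antisymm h2 (zero_le)))
    have hqR : 1 ≤ qt.toReal := by simpa using ENNReal.toReal_mono hqtop hqt
    have hrR : 1 ≤ rt.toReal := by simpa using ENNReal.toReal_mono hrtop hrt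
    have hpR : 1 ≤ pt.toReal := by simpa using ENNReal.toReal_mono hptop hpt
    have hqR0 : (0:ℝ) < qt.toReal := lt_of_lt_of_le zero_lt_one hqR
    have hexpR : 1 + 1/qt.toReal = 1/rt.toReal + 1/pt.toReal := by
      have := congrArg ENNReal.toReal hexp
      rwa [ENNReal.toReal_add ENNReal.one_ne_top (by simp [one_div, ENNReal.inv_ne_top, hqt0]),
        ENNReal.toReal_add (by simp [one_div, ENNReal.inv_ne_top, hrt0])
          (by simp [one_div, ENNReal.inv_ne_top, hpt0]),
        one_div, one_div, one_div, ENNReal.toReal_inv, ENNReal.toReal_inv, ENNReal.toReal_inv,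
        ENNReal.toReal_one, ← one_div, ← one_div, ← one_div] at this
    have key : ∀ ρ : ℝ, (∫⁻ θ, S ρ θ ^ qt.toReal ∂σ) ^ (1/qt.toReal) ≤ A ρ * B ρ := by
      intro ρ
      have hAρ : A ρ = (∫⁻ ω : sphere (0 : Euc n) 1,
          ENNReal.ofReal (f ‖r • e - ρ • (ω : Euc n)‖) ^ rt.toReal ∂σ) ^ (1/rt.toReal) := by
        show eLpNorm _ rt σ = _
        rw [eLpNorm_eq_lintegral_rpow_enorm_toReal hrt0 hrtop]
        congr 1
        exact lintegral_congr fun ω => by rw [Real.enorm_eq_ofReal (hf0 _)]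
      have hBρ : B ρ = (∫⁻ ω : sphere (0 : Euc n) 1,
          (‖φ (ρ • (ω : Euc n))‖₊ : ℝ≥0∞) ^ pt.toReal ∂σ) ^ (1/pt.toReal) := by
        show eLpNorm _ pt σ = _
        rw [eLpNorm_eq_lintegral_rpow_enorm_toReal hpt0 hptop]
        rfl
      rw [hAρ, hBρ]
      exact young_pointwise
        (k := fun θ ω : sphere (0 : Euc n) 1 =>
          ENNReal.ofReal (f ‖r • (θ : Euc n) - ρ • (ω : Euc n)‖))
        (Φ := fun ω : sphere (0 : Euc n) 1 => (‖φ (ρ • (ω : Euc n))‖₊ : ℝ≥0∞))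
        (hkmeas ρ) (hΦmeas ρ) hqR hrR hpR hexpR _
        (fun θ => hAconst ρ rt.toReal θ) (fun ω => hAconst' ρ rt.toReal ω)
    have hHmeas : Measurable (fun z : ℝ × sphere (0 : Euc n) 1 =>
        ENNReal.ofReal (z.1 ^ (n-1)) * S z.1 z.2) :=
      ((measurable_fst.pow_const (n-1)).ennreal_ofReal).mul hSu
    rw [eLpNorm_eq_lintegral_rpow_enorm_toReal hqt0 hqtop]
    calc (∫⁻ θ, (‖∫ y : Euc n, F (r • (θ : Euc n) - y) * φ y‖₊ : ℝ≥0∞) ^ qt.toReal ∂σ)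
          ^ (1/qt.toReal)
        ≤ (∫⁻ θ, (ENNReal.ofReal C₀ *
            ∫⁻ ρ in Ioi (0:ℝ), ENNReal.ofReal (ρ ^ (n-1)) * S ρ θ) ^ qt.toReal ∂σ)
            ^ (1/qt.toReal) :=
          ENNReal.rpow_le_rpow
            (lintegral_mono fun θ => ENNReal.rpow_le_rpow (step1 θ) hqR0.le) (by positivity)
      _ = ENNReal.ofReal C₀ * (∫⁻ θ,
            (∫⁻ ρ in Ioi (0:ℝ), ENNReal.ofReal (ρ ^ (n-1)) * S ρ θ) ^ qt.toReal ∂σ)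
            ^ (1/qt.toReal) := by
          rw [lintegral_congr (fun θ : sphere (0 : Euc n) 1 =>
              ENNReal.mul_rpow_of_nonneg (ENNReal.ofReal C₀)
                (∫⁻ ρ in Ioi (0:ℝ), ENNReal.ofReal (ρ ^ (n-1)) * S ρ θ) hqR0.le),
            lintegral_const_mul' _ _
              (ENNReal.rpow_ne_top_of_nonneg hqR0.le ENNReal.ofReal_ne_top),
            ENNReal.mul_rpow_of_nonneg _ _ (by positivity), ← ENNReal.rpow_mul,
            mul_one_div_cancel hqR0.ne', ENNReal.rpow_one]
      _ ≤ ENNReal.ofReal C₀ * ∫⁻ ρ in Ioi (0:ℝ),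
            (∫⁻ θ, (ENNReal.ofReal (ρ ^ (n-1)) * S ρ θ) ^ qt.toReal ∂σ) ^ (1/qt.toReal) :=
          mul_le_mul_right
            (minkowski_lintegral σ (volume.restrict (Ioi (0:ℝ)))
              (fun ρ θ => ENNReal.ofReal (ρ ^ (n-1)) * S ρ θ) hHmeas hqR) _
      _ = ENNReal.ofReal C₀ * ∫⁻ ρ in Ioi (0:ℝ),
            ENNReal.ofReal (ρ ^ (n-1)) * (∫⁻ θ, S ρ θ ^ qt.toReal ∂σ) ^ (1/qt.toReal) := by
          congr 1
          refine lintegral_congr fun ρ => ?_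
          rw [lintegral_congr (fun θ : sphere (0 : Euc n) 1 =>
              ENNReal.mul_rpow_of_nonneg (ENNReal.ofReal (ρ ^ (n-1))) (S ρ θ) hqR0.le),
            lintegral_const_mul' _ _
              (ENNReal.rpow_ne_top_of_nonneg hqR0.le ENNReal.ofReal_ne_top),
            ENNReal.mul_rpow_of_nonneg _ _ (by positivity), ← ENNReal.rpow_mul,
            mul_one_div_cancel hqR0.ne', ENNReal.rpow_one]
      _ ≤ ENNReal.ofReal C₀ * ∫⁻ ρ in Ioi (0:ℝ),
            ENNReal.ofReal (ρ ^ (n-1)) * (A ρ * B ρ) :=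
          mul_le_mul_right (lintegral_mono fun ρ => mul_le_mul_right (key ρ) _) _
      _ = ENNReal.ofReal C₀ * ∫⁻ ρ in Ioi (0:ℝ),
            A ρ * B ρ * ENNReal.ofReal (ρ ^ (n-1)) := by
          congr 1
          exact lintegral_congr fun ρ => mul_comm _ _
end
end
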